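/- arXiv:1912.07512 — 4 statements merged into one kernel-verified Lean document; each statement's English description precedes it below -/
import Mathlib

section
/- Let A be a finite-dimensional local algebra with radical J and M a finite length module. Then γ(M) = γ(Ω M) and γ(M) ≤ |J|, where γ(M) = limsup_n (t_n(M))^{1/n} and |J| is the length of J as a left A-module. -/
/-- The composition length of a module, as the Krull dimension of its submodule lattice. -/
noncomputable def moduleLength (A M : Type*) [Ring A] [AddCommGroup M] [Module A M] : ℕ∞ :=
  (Order.krullDim (Submodule A M)).unbotD 0

/-- `f : P → M` is a projective cover. -/
def IsProjCover (A : Type*) [Ring A] {P M : Type*} [AddCommGroup P] [Module A P]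
    [AddCommGroup M] [Module A M] (f : P →ₗ[A] M) : Prop :=
  Module.Projective A P ∧ Function.Surjective f ∧
    ∀ N : Submodule A P, N ⊔ LinearMap.ker f = ⊤ → N = ⊤

/-- The `n`-th Betti number `t_n = |Ω^n M / J·Ω^n M|` read off from a syzygy tower. -/
noncomputable def betti (A : Type*) [Ring A] (M : ℕ → Type*) [∀ n, AddCommGroup (M n)]
    [∀ n, Module A (M n)] (n : ℕ) : ℕ :=
  (moduleLength A (M n ⧸ (Ideal.jacobson (⊥ : Ideal A) • (⊤ : Submodule A (M n))))).toNat

set_option linter.unusedSectionVars false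
set_option maxHeartbeats 1000000


section OrderTools

variable {α β : Type*} [PartialOrder α] [PartialOrder β]

private lemma prod_split_aux : ∀ (n : ℕ) (q : LTSeries (α × β)), q.length = n →
    ∃ (pa : LTSeries α) (pb : LTSeries β),
      pa.last = q.last.1 ∧ pb.last = q.last.2 ∧ q.length ≤ pa.length + pb.length := by
  intro n
  induction n with
  | zero => exact fun q hq =>
      ⟨RelSeries.singleton _ q.last.1, RelSeries.singleton _ q.last.2, rfl, rfl, by omega⟩
  | succ n ih =>
    intro q hq
    obtain ⟨pa, pb, ha, hb, hlen⟩ := ih q.eraseLast (by simp [hq])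
    have hlt : q.eraseLast.last < q.last := q.eraseLast_last_rel_last (by omega)
    have hel : q.eraseLast.length = n := by simp [hq]
    rcases Prod.lt_iff.mp hlt with ⟨h1, h2⟩ | ⟨h1, h2⟩
    · rcases eq_or_lt_of_le h2 with h2' | h2'
      · exact ⟨pa.snoc q.last.1 (ha ▸ h1), pb, by simp, hb.trans h2', by simp; omega⟩
      · exact ⟨pa.snoc q.last.1 (ha ▸ h1), pb.snoc q.last.2 (hb ▸ h2'), by simp, by simp,
          by simp; omega⟩
    · rcases eq_or_lt_of_le h1 with h1' | h1'
      · exact ⟨pa, pb.snoc q.last.2 (hb ▸ h2), ha.trans h1', by simp, by simp; omega⟩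
      · exact ⟨pa.snoc q.last.1 (ha ▸ h1'), pb.snoc q.last.2 (hb ▸ h2), by simp, by simp,
          by simp; omega⟩

/-- Split a strict chain in a product order into chains in the factors. -/
lemma LTSeries.exists_prod_split (q : LTSeries (α × β)) :
    ∃ (pa : LTSeries α) (pb : LTSeries β),
      pa.last = q.last.1 ∧ pb.last = q.last.2 ∧ q.length ≤ pa.length + pb.length :=
  prod_split_aux q.length q rfl

lemma krullDim_chain_le {c : ℕ∞}
    (h : ∀ p : LTSeries α, (p.length : ℕ∞) ≤ c) : (Order.krullDim α).unbotD 0 ≤ c := by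
  rcases isEmpty_or_nonempty α with hα | hα
  · rw [Order.krullDim_eq_bot]; exact zero_le
  · rw [Order.krullDim_eq_iSup_length, WithBot.unbotD_coe]
    exact iSup_le h

lemma chain_le_krullDim (p : LTSeries α) : (p.length : ℕ∞) ≤ (Order.krullDim α).unbotD 0 := by
  have := Order.LTSeries.length_le_krullDim p
  rcases h : Order.krullDim α with _ | v
  · rw [h] at this; exact absurd this (not_le.mpr (WithBot.bot_lt_coe _))
  · rw [h] at this; exact_mod_cast (WithBot.coe_le_coe.mp this)

end OrderTools

section Len

variable {A : Type*} [Ring A]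

/-- every chain of submodules has length at most `c` -/
def ChainsLE (A : Type*) [Ring A] (X : Type*) [AddCommGroup X] [Module A X] (c : ℕ) : Prop :=
  ∀ p : LTSeries (Submodule A X), p.length ≤ c

variable {X Y : Type*} [AddCommGroup X] [Module A X] [AddCommGroup Y] [Module A Y]

lemma moduleLength_le_of_chainsLE {c : ℕ} (h : ChainsLE A X c) : moduleLength A X ≤ c :=
  krullDim_chain_le (fun p => by exact_mod_cast h p)

lemma moduleLength_ne_top_of_chainsLE {c : ℕ} (h : ChainsLE A X c) : moduleLength A X ≠ ⊤ := by
  intro ht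
  have := moduleLength_le_of_chainsLE h
  rw [ht] at this
  exact (WithTop.natCast_ne_top c) (top_le_iff.mp this)

/-- If the chains of `X` are bounded at all, then every chain is bounded by the length. -/
lemma chainsLE_toNat {c : ℕ} (h : ChainsLE A X c) :
    ChainsLE A X (moduleLength A X).toNat := by
  intro p
  have h1 : (p.length : ℕ∞) ≤ moduleLength A X := chain_le_krullDim p
  have h2 := moduleLength_ne_top_of_chainsLE h
  rw [← ENat.coe_toNat h2] at h1
  exact_mod_cast h1

lemma toNat_le_of_chainsLE {c : ℕ} (h : ChainsLE A X c) : (moduleLength A X).toNat ≤ c := by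
  have := moduleLength_le_of_chainsLE h
  rw [← ENat.coe_toNat (moduleLength_ne_top_of_chainsLE h)] at this
  exact_mod_cast this

/-- transport chains along a strictMono map of submodule lattices -/
lemma chainsLE_of_strictMono {c : ℕ} (F : Submodule A X → Submodule A Y)
    (hF : StrictMono F) (h : ChainsLE A Y c) : ChainsLE A X c := by
  intro p
  simpa using h (p.map F hF)

lemma chainsLE_of_injective {c : ℕ} (f : X →ₗ[A] Y) (hf : Function.Injective f)
    (h : ChainsLE A Y c) : ChainsLE A X c :=
  chainsLE_of_strictMono (Submodule.map f)
    (Monotone.strictMono_of_injective (fun _ _ h => Submodule.map_mono h)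
      (Submodule.map_injective_of_injective hf)) h

lemma chainsLE_of_surjective {c : ℕ} (f : X →ₗ[A] Y) (hf : Function.Surjective f)
    (h : ChainsLE A X c) : ChainsLE A Y c :=
  chainsLE_of_strictMono (Submodule.comap f)
    (Monotone.strictMono_of_injective (fun _ _ h => Submodule.comap_mono h)
      (Submodule.comap_injective_of_surjective hf)) h

lemma chainsLE_of_equiv {c : ℕ} (e : X ≃ₗ[A] Y) (h : ChainsLE A Y c) : ChainsLE A X c :=
  chainsLE_of_injective (e : X →ₗ[A] Y) e.injective h

lemma chainsLE_prod {cx cy : ℕ} (hx : ChainsLE A X cx) (hy : ChainsLE A Y cy) :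
    ChainsLE A (X × Y) (cx + cy) := by
  intro p
  set F : Submodule A (X × Y) → Submodule A X × Submodule A Y :=
    fun W => (W.comap (LinearMap.inl A X Y), W.map (LinearMap.snd A X Y)) with hFdef
  have key : ∀ {u v : Submodule A (X × Y)}, u ≤ v → F u = F v → u = v := by
    intro u v huv hFuv
    have h1 : u.comap (LinearMap.inl A X Y) = v.comap (LinearMap.inl A X Y) :=
      congrArg Prod.fst hFuv
    have h2 : u.map (LinearMap.snd A X Y) = v.map (LinearMap.snd A X Y) :=
      congrArg Prod.snd hFuv
    apply le_antisymm huv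
    intro z hz
    have hz2 : z.2 ∈ u.map (LinearMap.snd A X Y) := h2 ▸ ⟨z, hz, rfl⟩
    obtain ⟨w, hw, hw2⟩ := hz2
    have hw2' : w.2 = z.2 := hw2
    have hzw : z - w ∈ v := v.sub_mem hz (huv hw)
    have h5 : ((z.1 - w.1, (0 : Y)) : X × Y) ∈ v := by
      have he : z - w = ((z.1 - w.1, z.2 - w.2) : X × Y) := rfl
      rw [he, show z.2 - w.2 = 0 by rw [hw2']; simp] at hzw
      exact hzw
    have h6 : (z.1 - w.1) ∈ v.comap (LinearMap.inl A X Y) := by simpa using h5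
    rw [← h1] at h6
    have h7 : ((z.1 - w.1, (0 : Y)) : X × Y) ∈ u := by simpa using h6
    have h8 := u.add_mem h7 hw
    have he2 : ((z.1 - w.1, (0 : Y)) : X × Y) + w = z := by
      ext
      · simp
      · simp [hw2']
    rwa [he2] at h8
  have hF : StrictMono F := by
    intro u v huv
    refine lt_of_le_of_ne ⟨Submodule.comap_mono huv.le, Submodule.map_mono huv.le⟩ ?_
    exact fun h => huv.ne (key huv.le h)
  obtain ⟨pa, pb, _, _, hlen⟩ := (p.map F hF).exists_prod_split
  have := hx pa
  have := hy pb
  simp only [LTSeries.map_length] at hlen ⊢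
  omega

end Len

section Units

variable (k : Type*) {A : Type*} [Field k] [Ring A] [Algebra k A] [FiniteDimensional k A]
include k

lemma isUnit_of_mul_eq_one' (a b : A) (h : a * b = 1) : IsUnit a ∧ IsUnit b := by
  have hcomp : (LinearMap.mulLeft k a).comp (LinearMap.mulLeft k b) = LinearMap.id := by
    rw [← LinearMap.mulLeft_mul, h, LinearMap.mulLeft_one]
  have hsurj : Function.Surjective (LinearMap.mulLeft k a) := by
    intro y
    exact ⟨b * y, by simpa using congrArg (fun (f : A →ₗ[k] A) => f y) hcomp⟩
  have hinj : Function.Injective (LinearMap.mulLeft k a) :=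
    (LinearMap.injective_iff_surjective).mpr hsurj
  obtain ⟨c, hc⟩ := hsurj 1
  have hc : a * c = 1 := hc
  have hca : c * a = 1 := by
    apply hinj
    show a * (c * a) = a * 1
    rw [← mul_assoc, hc, one_mul, mul_one]
  have hua : IsUnit a := ⟨⟨a, c, hc, hca⟩, rfl⟩
  have hbc : b = c := by
    calc b = (c * a) * b := by rw [hca, one_mul]
    _ = c * (a * b) := by rw [mul_assoc]
    _ = c := by rw [h, mul_one]
  exact ⟨hua, hbc ▸ ⟨⟨c, a, hca, hc⟩, rfl⟩⟩

lemma isUnit_of_isUnit_mul_left (c a : A) (h : IsUnit (c * a)) : IsUnit a := by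
  obtain ⟨u, hu⟩ := h
  have h1 : (↑u⁻¹ * c) * a = 1 := by rw [mul_assoc, ← hu]; exact u.inv_mul
  exact (isUnit_of_mul_eq_one' k _ _ h1).2

lemma isUnit_of_isUnit_mul_right (a c : A) (h : IsUnit (a * c)) : IsUnit a := by
  obtain ⟨u, hu⟩ := h
  have h1 : a * (c * ↑u⁻¹) = 1 := by rw [← mul_assoc, ← hu]; exact u.mul_inv
  exact (isUnit_of_mul_eq_one' k _ _ h1).1

variable (A) in
/-- The set of nonunits of a finite-dimensional local algebra is an ideal. -/
def nonunitsIdeal [IsLocalRing A] : Ideal A where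
  carrier := {a | ¬IsUnit a}
  add_mem' := by
    intro a b ha hb hab
    obtain ⟨u, hu⟩ := hab
    have h1 : (↑u⁻¹ : A) * a + (↑u⁻¹ : A) * b = 1 := by
      rw [← mul_add, ← hu]; exact u.inv_mul
    rcases IsLocalRing.isUnit_or_isUnit_of_add_one h1 with h | h
    · exact ha (isUnit_of_isUnit_mul_left k _ _ h)
    · exact hb (isUnit_of_isUnit_mul_left k _ _ h)
  zero_mem' := by simp [not_isUnit_zero]
  smul_mem' := by
    intro c a ha h
    rw [smul_eq_mul] at h
    exact ha (isUnit_of_isUnit_mul_left k c a h)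

variable [IsLocalRing A]

lemma mem_nonunitsIdeal {a : A} : a ∈ nonunitsIdeal k A ↔ ¬IsUnit a := Iff.rfl

lemma nonunitsIdeal_isMaximal : (nonunitsIdeal k A).IsMaximal := by
  constructor
  constructor
  · intro h
    have : (1 : A) ∈ nonunitsIdeal k A := h ▸ Submodule.mem_top
    exact this isUnit_one
  · intro I hI
    obtain ⟨x, hxI, hxm⟩ := SetLike.exists_of_lt hI
    have : IsUnit x := not_not.mp hxm
    exact Ideal.eq_top_of_isUnit_mem I hxI this

lemma isMaximal_eq_nonunitsIdeal {I : Ideal A} (hI : I.IsMaximal) : I = nonunitsIdeal k A := by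
  have hle : I ≤ nonunitsIdeal k A := by
    intro x hx hu
    exact hI.ne_top (Ideal.eq_top_of_isUnit_mem I hx hu)
  rcases eq_or_lt_of_le hle with h | h
  · exact h
  · exact absurd (hI.1.2 _ h) (nonunitsIdeal_isMaximal k).ne_top

variable (A) in
lemma jacobson_bot_eq_nonunits : Ideal.jacobson (⊥ : Ideal A) = nonunitsIdeal k A := by
  rw [Ideal.jacobson]
  apply le_antisymm
  · exact sInf_le ⟨bot_le, nonunitsIdeal_isMaximal k⟩
  · apply le_sInf
    rintro I ⟨-, hI⟩
    exact (isMaximal_eq_nonunitsIdeal k hI).ge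

lemma not_isUnit_of_mem_jacobson {a : A} (h : a ∈ Ideal.jacobson (⊥ : Ideal A)) : ¬IsUnit a := by
  rw [jacobson_bot_eq_nonunits k A] at h; exact h

lemma jacobson_mul_mem_right {a : A} (c : A) (h : a ∈ Ideal.jacobson (⊥ : Ideal A)) :
    a * c ∈ Ideal.jacobson (⊥ : Ideal A) := by
  rw [jacobson_bot_eq_nonunits k A] at h ⊢
  exact fun hu => h (isUnit_of_isUnit_mul_right k a c hu)

lemma mem_jacobson_of_not_isUnit {a : A} (h : ¬IsUnit a) :
    a ∈ Ideal.jacobson (⊥ : Ideal A) := by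
  rw [jacobson_bot_eq_nonunits k A]; exact h

lemma isUnit_one_sub_jacobson {a : A} (h : a ∈ Ideal.jacobson (⊥ : Ideal A)) :
    IsUnit (1 - a) := by
  have hadd : a + (1 - a) = 1 := by abel
  rcases IsLocalRing.isUnit_or_isUnit_of_add_one hadd with hu | hu
  · exact absurd hu (not_isUnit_of_mem_jacobson k h)
  · exact hu

end Units


section Noeth

variable (k : Type*) {A : Type*} [Field k] [Ring A] [Algebra k A] [FiniteDimensional k A]
include k

lemma isNoetherianRing_of_findim : IsNoetherianRing A := by
  have h1 : IsNoetherian k A := IsNoetherian.iff_fg.mpr inferInstance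
  exact isNoetherian_of_tower k h1

lemma isNoetherian_mod (X : Type*) [AddCommGroup X] [Module A X] [Module.Finite A X] :
    IsNoetherian A X := by
  have := isNoetherianRing_of_findim k (A := A)
  exact isNoetherian_of_isNoetherianRing_of_finite A X

/-- Every nonempty set of submodules of a finite module has a maximal element. -/
lemma exists_maximal_submodule {X : Type*} [AddCommGroup X] [Module A X] [Module.Finite A X]
    (S : Set (Submodule A X)) (hS : S.Nonempty) :
    ∃ W ∈ S, ∀ I ∈ S, ¬ W < I := by
  have := isNoetherian_mod k (A := A) X
  exact set_has_maximal_iff_noetherian.mpr this S hS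

/-- Chains of `A`-submodules of a finite `A`-module are bounded (via `k`-dimension). -/
lemma exists_chainsLE (X : Type*) [AddCommGroup X] [Module A X] [Module.Finite A X] :
    ∃ B : ℕ, ChainsLE A X B := by
  letI : Module k X := Module.compHom X (algebraMap k A)
  haveI : IsScalarTower k A X := ⟨fun c a x => by
    rw [Algebra.smul_def]
    exact mul_smul (algebraMap k A c) a x⟩
  haveI : Module.Finite k X := Module.Finite.trans A X
  haveI : FiniteDimensional k X := inferInstance
  refine ⟨Module.finrank k X, fun p => ?_⟩
  have hF : StrictMono (fun (N : Submodule A X) => N.restrictScalars k) :=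
    Monotone.strictMono_of_injective (fun _ _ h => h)
      (Submodule.restrictScalars_injective k A X)
  set q := p.map _ hF with hq
  have key : ∀ n : ℕ, ∀ hn : n ≤ q.length, n ≤ Module.finrank k (q ⟨n, Nat.lt_succ_of_le hn⟩) := by
    intro n
    induction n with
    | zero => intro _; exact Nat.zero_le _
    | succ n ih =>
      intro hn
      have h1 := ih (by omega)
      have hlt : q ⟨n, by omega⟩ < q ⟨n + 1, by omega⟩ := q.strictMono (by simp)
      have h2 := Submodule.finrank_lt_finrank_of_lt hlt
      omega
  have h3 := key q.length le_rfl
  have h4 : Module.finrank k (q ⟨q.length, by omega⟩) ≤ Module.finrank k X :=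
    Submodule.finrank_le _
  have h5 : q.length = p.length := by simp [hq]
  omega

end Noeth

section Nakayama

variable (k : Type*) {A : Type*} [Field k] [Ring A] [Algebra k A] [FiniteDimensional k A]
  [IsLocalRing A]
include k

local notation "J" => Ideal.jacobson (⊥ : Ideal A)

variable {X : Type*} [AddCommGroup X] [Module A X]

lemma coatom_smul_le {W : Submodule A X} (hW : IsCoatom W) : J • (⊤ : Submodule A X) ≤ W := by
  rw [Submodule.smul_le]
  intro a ha p _
  by_contra hnW
  have hlt : W < W ⊔ Submodule.span A {a • p} := by
    refine lt_of_le_of_ne le_sup_left (fun h => hnW ?_)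
    have : a • p ∈ W ⊔ Submodule.span A {a • p} :=
      Submodule.mem_sup_right (Submodule.mem_span_singleton_self _)
    rwa [← h] at this
  have htop : W ⊔ Submodule.span A {a • p} = ⊤ := hW.2 _ hlt
  have hp : p ∈ W ⊔ Submodule.span A {a • p} := htop ▸ Submodule.mem_top
  obtain ⟨w, hw, z, hz, hwz⟩ := Submodule.mem_sup.mp hp
  obtain ⟨c, hc⟩ := Submodule.mem_span_singleton.mp hz
  have hca : c * a ∈ J := Submodule.smul_mem _ c ha
  have hz' : (c * a) • p = z := by rw [← smul_smul]; exact hc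
  have hsub : (1 - c * a) • p = w := by
    rw [sub_smul, one_smul, hz', ← hwz, add_sub_cancel_right]
  obtain ⟨u, hu⟩ := isUnit_one_sub_jacobson k hca
  have hpW : p ∈ W := by
    have : ((↑u⁻¹ : A) * (1 - c * a)) • p ∈ W := by
      rw [mul_smul, hsub]
      exact W.smul_mem _ hw
    rwa [← hu, u.inv_mul, one_smul] at this
  exact hnW (W.smul_mem a hpW)

lemma nakayama_sup [Module.Finite A X] {N : Submodule A X}
    (h : N ⊔ J • (⊤ : Submodule A X) = ⊤) : N = ⊤ := by
  by_contra hN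
  obtain ⟨W, ⟨hNW, hWtop⟩, hmax⟩ :=
    exists_maximal_submodule k {W : Submodule A X | N ≤ W ∧ W ≠ ⊤} ⟨N, le_rfl, hN⟩
  have hco : IsCoatom W := by
    refine ⟨hWtop, fun b hb => ?_⟩
    by_contra hbt
    exact hmax b ⟨hNW.trans hb.le, hbt⟩ hb
  have := coatom_smul_le k hco
  have : (⊤ : Submodule A X) ≤ W := by
    rw [← h]
    exact sup_le hNW this
  exact hWtop (top_le_iff.mp this)

/-- The kernel of a projective cover map lies in `J • ⊤` (it is superfluous). -/
lemma superfluous_le_smul {Y : Type*} [AddCommGroup Y] [Module A Y] [Module.Finite A X]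
    (f : X →ₗ[A] Y) (hsmall : ∀ N : Submodule A X, N ⊔ LinearMap.ker f = ⊤ → N = ⊤) :
    LinearMap.ker f ≤ J • (⊤ : Submodule A X) := by
  intro x hx
  by_contra hxJ
  obtain ⟨W, ⟨hJW, hxW⟩, hmax⟩ := exists_maximal_submodule k
    {W : Submodule A X | J • (⊤ : Submodule A X) ≤ W ∧ x ∉ W} ⟨J • ⊤, le_rfl, hxJ⟩
  have hWx : W ⊔ Submodule.span A {x} = ⊤ := by
    rw [eq_top_iff]
    intro v _
    by_cases hv : v ∈ W
    · exact Submodule.mem_sup_left hv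
    · have hlt : W < W ⊔ Submodule.span A {v} :=
        lt_of_le_of_ne le_sup_left (fun h => hv (h ▸ Submodule.mem_sup_right
          (Submodule.mem_span_singleton_self v)))
      have hnotS : ¬ (J • (⊤ : Submodule A X) ≤ W ⊔ Submodule.span A {v} ∧
          x ∉ W ⊔ Submodule.span A {v}) := fun hS => hmax _ hS hlt
      have hxin : x ∈ W ⊔ Submodule.span A {v} := by
        by_contra hxn
        exact hnotS ⟨hJW.trans le_sup_left, hxn⟩
      obtain ⟨w, hw, z, hz, hwz⟩ := Submodule.mem_sup.mp hxin
      obtain ⟨c, hc⟩ := Submodule.mem_span_singleton.mp hz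
      by_cases hcu : IsUnit c
      · obtain ⟨u, hu⟩ := hcu
        have hv' : v = (↑u⁻¹ : A) • (x - w) := by
          rw [← hwz, ← hc, add_sub_cancel_left, smul_smul, ← hu, u.inv_mul, one_smul]
        rw [hv']
        refine Submodule.smul_mem _ _ (Submodule.sub_mem _ ?_ ?_)
        · exact Submodule.mem_sup_right (Submodule.mem_span_singleton_self x)
        · exact Submodule.mem_sup_left hw
      · have hcJ : c ∈ J := mem_jacobson_of_not_isUnit k hcu
        have : z ∈ W := hJW (hc ▸ Submodule.smul_mem_smul hcJ Submodule.mem_top)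
        exact absurd (hwz ▸ W.add_mem hw this) hxW
  have : W ⊔ LinearMap.ker f = ⊤ := by
    rw [eq_top_iff, ← hWx]
    exact sup_le_sup_left (Submodule.span_le.mpr (by simpa using hx)) W
  exact hxW ((hsmall W this) ▸ Submodule.mem_top)

/-- A module admitting a cover by a finite module with superfluous kernel is finite. -/
lemma finite_of_cover {Y : Type*} [AddCommGroup Y] [Module A Y] [Module.Finite A Y]
    (f : X →ₗ[A] Y) (hf : Function.Surjective f)
    (hsmall : ∀ N : Submodule A X, N ⊔ LinearMap.ker f = ⊤ → N = ⊤) :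
    Module.Finite A X := by
  classical
  obtain ⟨s, hs⟩ := Module.Finite.fg_top (R := A) (M := Y)
  set g : Y → X := fun y => Classical.choose (hf y) with hg
  have hgspec : ∀ y, f (g y) = y := fun y => Classical.choose_spec (hf y)
  set N : Submodule A X := Submodule.span A (g '' ↑s) with hN
  have hmap : Submodule.map f N = ⊤ := by
    rw [hN, Submodule.map_span, ← Set.image_comp]
    have : (f ∘ g) '' ↑s = ↑s := by
      ext y; constructor
      · rintro ⟨x, hx, rfl⟩; simpa [hgspec] using hx
      · intro hy; exact ⟨y, hy, hgspec y⟩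
    rw [this, hs]
  have hsup : N ⊔ LinearMap.ker f = ⊤ := by
    rw [eq_top_iff]
    intro p _
    have : f p ∈ Submodule.map f N := hmap ▸ Submodule.mem_top
    obtain ⟨q, hq, hq2⟩ := this
    have : p - q ∈ LinearMap.ker f := by
      rw [LinearMap.mem_ker, map_sub, hq2, sub_self]
    have := Submodule.add_mem _ (Submodule.mem_sup_left hq) (Submodule.mem_sup_right this)
    simpa using this
  have hNtop : N = ⊤ := hsmall N hsup
  refine ⟨?_⟩
  rw [← hNtop, hN]
  exact Submodule.fg_span ((s.finite_toSet).image g)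

end Nakayama


section Lists

variable {A X : Type*} [Ring A] [AddCommGroup X] [Module A X]

/-- each element is not in the span of the later ones -/
def GoodList (A : Type*) [Ring A] {X : Type*} [AddCommGroup X] [Module A X] :
    List X → Prop
  | [] => True
  | a :: t => a ∉ Submodule.span A {x | x ∈ t} ∧ GoodList A t

lemma goodList_get : ∀ l : List X, GoodList A l → ∀ j (hj : j < l.length),
    l[j] ∉ Submodule.span A {x | x ∈ l.drop (j + 1)} := by
  intro l
  induction l with
  | nil => intro _ j hj; simp at hj
  | cons a t ih =>
    intro hg j hj
    cases j with
    | zero => simpa using hg.1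
    | succ j =>
      have := ih hg.2 j (by simpa using hj)
      simpa using this

lemma goodList_length_le {d : ℕ} (hd : ChainsLE A X d) :
    ∀ l : List X, GoodList A l → l.length ≤ d := by
  intro l hg
  set p : LTSeries (Submodule A X) :=
    ⟨l.length, fun i => Submodule.span A {x | x ∈ l.drop (l.length - i)}, by
      intro i
      have hi : (i : ℕ) < l.length := i.2
      set j := l.length - (i : ℕ) - 1 with hj
      have h1 : l.length - ((i : ℕ) + 1) = j := by omega
      have h2 : l.length - (i : ℕ) = j + 1 := by omega
      have hjl : j < l.length := by omega
      have hdrop : l.drop j = l[j] :: l.drop (j + 1) := List.drop_eq_getElem_cons hjl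
      have hnotin := goodList_get l hg j hjl
      simp only [Fin.coe_castSucc, Fin.val_succ, h1, h2]
      have hle : Submodule.span A {x | x ∈ l.drop (j + 1)} ≤
          Submodule.span A {x | x ∈ l.drop j} := by
        apply Submodule.span_mono
        intro x hx
        rw [hdrop]
        exact List.mem_cons_of_mem _ hx
      refine lt_of_le_of_ne hle (fun h => hnotin ?_)
      rw [h]
      exact Submodule.subset_span (by rw [hdrop]; exact List.mem_cons_self)⟩ with hp
  have := hd p
  simpa [hp] using this

lemma exists_goodList : ∀ l : List X, ∃ l' : List X, GoodList A l' ∧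
    Submodule.span A {x | x ∈ l'} = Submodule.span A {x | x ∈ l} := by
  intro l
  induction l with
  | nil => exact ⟨[], trivial, rfl⟩
  | cons a t ih =>
    obtain ⟨t', hg, hs⟩ := ih
    have hset : {x | x ∈ a :: t} = insert a {x | x ∈ t} := by ext x; simp
    by_cases ha : a ∈ Submodule.span A {x | x ∈ t'}
    · refine ⟨t', hg, ?_⟩
      rw [hset, Submodule.span_insert, ← hs, sup_eq_right.mpr]
      rwa [Submodule.span_le, Set.singleton_subset_iff]
    · refine ⟨a :: t', ⟨ha, hg⟩, ?_⟩
      have hset' : {x | x ∈ a :: t'} = insert a {x | x ∈ t'} := by ext x; simp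
      rw [hset, hset', Submodule.span_insert, Submodule.span_insert, hs]

lemma exists_short_spanning [Module.Finite A X] {d : ℕ} (hd : ChainsLE A X d) :
    ∃ l : List X, l.length ≤ d ∧ Submodule.span A {x | x ∈ l} = ⊤ := by
  obtain ⟨s, hs⟩ := Module.Finite.fg_top (R := A) (M := X)
  obtain ⟨l', hg, hspan⟩ := exists_goodList (A := A) s.toList
  refine ⟨l', goodList_length_le hd l' hg, ?_⟩
  rw [hspan]
  have : {x | x ∈ s.toList} = (↑s : Set X) := by ext x; simp
  rw [this, hs]

end Lists

section Gens

variable (k : Type*) {A : Type*} [Field k] [Ring A] [Algebra k A] [FiniteDimensional k A]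
  [IsLocalRing A]
include k

local notation "J" => Ideal.jacobson (⊥ : Ideal A)

/-- A finite module has a generating list bounded by the length of its top. -/
lemma exists_short_generators (X : Type*) [AddCommGroup X] [Module A X] [Module.Finite A X]
    {d : ℕ} (hd : ChainsLE A (X ⧸ (J • (⊤ : Submodule A X))) d) :
    ∃ l : List X, l.length ≤ d ∧ Submodule.span A {x | x ∈ l} = ⊤ := by
  set Q := X ⧸ (J • (⊤ : Submodule A X)) with hQ
  set π := (J • (⊤ : Submodule A X)).mkQ with hπ
  have hπs : Function.Surjective π := Submodule.mkQ_surjective _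
  obtain ⟨lt', hlen, hspan⟩ := exists_short_spanning (A := A) (X := Q) hd
  set g : Q → X := fun y => Classical.choose (hπs y) with hg
  have hgspec : ∀ y, π (g y) = y := fun y => Classical.choose_spec (hπs y)
  set l : List X := lt'.map g with hl
  have himg : π '' {x | x ∈ l} = {x | x ∈ lt'} := by
    ext y
    constructor
    · rintro ⟨x, hx, rfl⟩
      rw [hl] at hx
      simp only [Set.mem_setOf_eq, List.mem_map] at hx
      obtain ⟨y', hy', rfl⟩ := hx
      rw [hgspec]; exact hy'
    · intro hy
      exact ⟨g y, by simp [hl]; exact ⟨y, hy, rfl⟩, hgspec y⟩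
  have hmap : Submodule.map π (Submodule.span A {x | x ∈ l}) = ⊤ := by
    rw [Submodule.map_span, himg, hspan]
  have hsup : Submodule.span A {x | x ∈ l} ⊔ J • (⊤ : Submodule A X) = ⊤ := by
    have := congrArg (Submodule.comap π) hmap
    rw [Submodule.comap_map_eq, Submodule.comap_top, Submodule.ker_mkQ] at this
    exact this
  refine ⟨l, ?_, nakayama_sup k hsup⟩
  simp [hl, hlen]

end Gens

section Pi

variable (k : Type*) {A : Type*} [Field k] [Ring A] [Algebra k A] [FiniteDimensional k A]
  [IsLocalRing A]

include k

local notation "J" => Ideal.jacobson (⊥ : Ideal A)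

/-- `J • (A^r) = J^r` as submodules, using that `J` is a two-sided ideal. -/
lemma jacobson_smul_top_pi (r : ℕ) :
    J • (⊤ : Submodule A (Fin r → A)) = Submodule.pi Set.univ (fun _ => J) := by
  apply le_antisymm
  · rw [Submodule.smul_le]
    intro a ha x _
    rw [Submodule.mem_pi]
    intro i _
    exact jacobson_mul_mem_right k (x i) ha
  · intro x hx
    rw [Submodule.mem_pi] at hx
    classical
    have hrepr : x = ∑ i : Fin r, (x i) • (Pi.single i (1 : A) : Fin r → A) := by
      funext j
      rw [Finset.sum_apply]
      rw [Finset.sum_eq_single j]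
      · simp
      · intro i _ hij
        simp [Pi.single_apply, (Ne.symm hij)]
      · simp
    rw [hrepr]
    exact Submodule.sum_mem _ fun i _ =>
      Submodule.smul_mem_smul (hx i (Set.mem_univ i)) Submodule.mem_top

end Pi

section PiEquiv

variable {A V : Type*} [Ring A] [AddCommGroup V] [Module A V]

/-- `(Fin (r+1) → V) ≃ₗ V × (Fin r → V)`. -/
def finSuccLinearEquiv (r : ℕ) : (Fin (r + 1) → V) ≃ₗ[A] V × (Fin r → V) where
  toFun f := (f 0, fun i => f i.succ)
  map_add' f g := rfl
  map_smul' c f := rfl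
  invFun p := Fin.cons p.1 p.2
  left_inv f := Fin.cons_self_tail f
  right_inv p := by
    refine Prod.ext (by simp) ?_
    funext i
    simp

/-- subtype of pi submodule is equivalent to pi of subtypes -/
def piSubmoduleEquiv (r : ℕ) (N : Submodule A V) :
    ↥(Submodule.pi Set.univ (fun _ : Fin r => N)) ≃ₗ[A] (Fin r → ↥N) where
  toFun x i := ⟨x.1 i, Submodule.mem_pi.mp x.2 i (Set.mem_univ i)⟩
  map_add' x y := rfl
  map_smul' c x := rfl
  invFun f := ⟨fun i => f i, Submodule.mem_pi.mpr fun i _ => (f i).2⟩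
  left_inv x := rfl
  right_inv f := rfl

lemma chainsLE_subsingleton (X : Type*) [AddCommGroup X] [Module A X] [Subsingleton X] :
    ChainsLE A X 0 := by
  haveI : Subsingleton (Submodule A X) := by
    constructor
    intro a b
    ext x
    rw [Subsingleton.elim x 0]
    simp
  intro p
  by_contra h
  have h1 : (0 : ℕ) < p.length := by omega
  have := p.strictMono (show (⟨0, by omega⟩ : Fin (p.length + 1)) < ⟨1, by omega⟩ by
    simp [Fin.lt_def])
  exact this.ne (Subsingleton.elim _ _)

lemma chainsLE_pi {c : ℕ} (h : ChainsLE A V c) (r : ℕ) :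
    ChainsLE A (Fin r → V) (r * c) := by
  induction r with
  | zero =>
    haveI : Subsingleton (Fin 0 → V) := by
      constructor; intro a b; funext i; exact absurd i.2 (by omega)
    simpa using chainsLE_subsingleton (A := A) (Fin 0 → V)
  | succ r ih =>
    have := chainsLE_prod h ih
    have h2 := chainsLE_of_equiv (finSuccLinearEquiv (A := A) (V := V) r) this
    have : c + r * c = (r + 1) * c := by ring
    rwa [this] at h2

end PiEquiv

section ListTotal

variable {A : Type*} [Ring A]

/-- total map from a generating list -/
def listTotal {P : Type*} [AddCommGroup P] [Module A P] (l : List P) :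
    (Fin l.length → A) →ₗ[A] P where
  toFun a := ∑ i, a i • l.get i
  map_add' a b := by simp [add_smul, Finset.sum_add_distrib]
  map_smul' c a := by simp [mul_smul, Finset.smul_sum]

lemma listTotal_surjective {P : Type*} [AddCommGroup P] [Module A P] (l : List P)
    (h : Submodule.span A {x | x ∈ l} = ⊤) : Function.Surjective (listTotal (A := A) l) := by
  rw [← LinearMap.range_eq_top, eq_top_iff, ← h, Submodule.span_le]
  intro x hx
  obtain ⟨i, hi⟩ := List.mem_iff_get.mp hx
  classical
  refine ⟨Pi.single i 1, ?_⟩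
  simp only [listTotal, LinearMap.coe_mk, AddHom.coe_mk]
  rw [Finset.sum_eq_single i]
  · rw [← hi]; simp
  · intro j _ hj; simp [Pi.single_apply, hj]
  · simp

end ListTotal

section Step

variable (k : Type*) {A : Type*} [Field k] [Ring A] [Algebra k A] [FiniteDimensional k A]
  [IsLocalRing A]
include k

local notation "J" => Ideal.jacobson (⊥ : Ideal A)

/-- the key inequality: `t(Y) ≤ t(X) * |J|` for a syzygy `Y` of `X`. -/
lemma betti_step {Xm Pc Y : Type*} [AddCommGroup Xm] [Module A Xm] [Module.Finite A Xm]
    [AddCommGroup Pc] [Module A Pc] [AddCommGroup Y] [Module A Y]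
    (f : Pc →ₗ[A] Xm) (hfs : Function.Surjective f)
    (hsmall : ∀ N : Submodule A Pc, N ⊔ LinearMap.ker f = ⊤ → N = ⊤)
    (e : Y ≃ₗ[A] ↥(LinearMap.ker f)) :
    (moduleLength A (Y ⧸ (J • (⊤ : Submodule A Y)))).toNat ≤
      (moduleLength A (Xm ⧸ (J • (⊤ : Submodule A Xm)))).toNat *
        (moduleLength A ↥J).toNat := by
  classical
  haveI hPfin : Module.Finite A Pc := finite_of_cover (k := k) f hfs hsmall
  have hK : LinearMap.ker f ≤ J • (⊤ : Submodule A Pc) := superfluous_le_smul k f hsmall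
  -- length of J is well-defined
  haveI := isNoetherianRing_of_findim k (A := A)
  haveI : Module.Finite A ↥J := Module.Finite.iff_fg.mpr (IsNoetherian.noetherian _)
  obtain ⟨BJ, hBJ⟩ := exists_chainsLE k (A := A) ↥J
  set LJ := (moduleLength A ↥J).toNat with hLJ
  have hcJ : ChainsLE A ↥J LJ := chainsLE_toNat hBJ
  -- top of Xm
  haveI : Module.Finite A (Xm ⧸ (J • (⊤ : Submodule A Xm))) :=
    Module.Finite.quotient A _
  obtain ⟨Bt, hBt⟩ := exists_chainsLE k (A := A) (Xm ⧸ (J • (⊤ : Submodule A Xm)))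
  set r0 := (moduleLength A (Xm ⧸ (J • (⊤ : Submodule A Xm)))).toNat with hr0
  have hct : ChainsLE A (Xm ⧸ (J • (⊤ : Submodule A Xm))) r0 := chainsLE_toNat hBt
  -- top of Pc ≃ top of Xm
  have e9 : (Pc ⧸ (J • (⊤ : Submodule A Pc))) ≃ₗ[A] (Xm ⧸ (J • (⊤ : Submodule A Xm))) := by
    set g := (J • (⊤ : Submodule A Xm)).mkQ.comp f with hg
    have hgs : Function.Surjective g := (Submodule.mkQ_surjective _).comp hfs
    have hker : LinearMap.ker g = J • (⊤ : Submodule A Pc) := by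
      rw [hg, LinearMap.ker_comp, Submodule.ker_mkQ]
      have h1 : J • (⊤ : Submodule A Xm) = Submodule.map f (J • (⊤ : Submodule A Pc)) := by
        rw [Submodule.map_smul'', Submodule.map_top, LinearMap.range_eq_top.mpr hfs]
      rw [h1, Submodule.comap_map_eq, sup_eq_left.mpr hK]
    exact (Submodule.quotEquivOfEq _ _ hker.symm).trans (g.quotKerEquivOfSurjective hgs)
  have hcp : ChainsLE A (Pc ⧸ (J • (⊤ : Submodule A Pc))) r0 := chainsLE_of_equiv e9 hct
  -- generators of Pc
  obtain ⟨l, hlr, hlspan⟩ := exists_short_generators k Pc hcp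
  set r := l.length with hr
  set φ := listTotal (A := A) l with hφ
  have hφs : Function.Surjective φ := listTotal_surjective l hlspan
  -- chains bound for J•⊤ in A^r
  have hpi : ChainsLE A ↥(Submodule.pi Set.univ (fun _ : Fin r => J)) (r * LJ) :=
    chainsLE_of_equiv (piSubmoduleEquiv r (J : Submodule A A)) (chainsLE_pi hcJ r)
  have hpi2 : ChainsLE A ↥(J • (⊤ : Submodule A (Fin r → A))) (r * LJ) :=
    chainsLE_of_equiv (LinearEquiv.ofEq _ _ (jacobson_smul_top_pi k r)) hpi
  -- push forward to J•⊤ in Pc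
  have hmapeq : Submodule.map φ (J • (⊤ : Submodule A (Fin r → A))) =
      J • (⊤ : Submodule A Pc) := by
    rw [Submodule.map_smul'', Submodule.map_top, LinearMap.range_eq_top.mpr hφs]
  have hJP : ChainsLE A ↥(J • (⊤ : Submodule A Pc)) (r * LJ) := by
    have h1 := chainsLE_of_surjective (φ.submoduleMap (J • (⊤ : Submodule A (Fin r → A))))
      (LinearMap.submoduleMap_surjective φ _) hpi2
    exact chainsLE_of_equiv (LinearEquiv.ofEq _ _ hmapeq.symm) h1
  -- down to ker f and Y
  have hker : ChainsLE A ↥(LinearMap.ker f) (r * LJ) :=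
    chainsLE_of_injective (Submodule.inclusion hK) (Submodule.inclusion_injective hK) hJP
  have hY : ChainsLE A Y (r * LJ) := chainsLE_of_equiv e hker
  have htopY : ChainsLE A (Y ⧸ (J • (⊤ : Submodule A Y))) (r * LJ) :=
    chainsLE_of_surjective (J • (⊤ : Submodule A Y)).mkQ (Submodule.mkQ_surjective _) hY
  calc (moduleLength A (Y ⧸ (J • (⊤ : Submodule A Y)))).toNat ≤ r * LJ :=
        toNat_le_of_chainsLE htopY
  _ ≤ r0 * LJ := Nat.mul_le_mul_right _ hlr

end Step


namespace LimsupTools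
open Filter Real

/-- `rs d m n = d n ^ (1/(n+m))`. -/
noncomputable def rs (d : ℕ → ℕ) (m : ℕ) (n : ℕ) : ℝ := (d n : ℝ) ^ (((n : ℝ) + m)⁻¹)

lemma rs_nonneg (d : ℕ → ℕ) (m n : ℕ) : 0 ≤ rs d m n := Real.rpow_nonneg (Nat.cast_nonneg _) _

lemma eps_tendsto (m : ℕ) : Tendsto (fun n : ℕ => ((n : ℝ) + m)⁻¹) atTop (nhds 0) :=
  tendsto_inv_atTop_zero.comp
    (tendsto_atTop_add_const_right atTop (m : ℝ) tendsto_natCast_atTop_atTop)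

lemma g_tendsto (m : ℕ) :
    Tendsto (fun n : ℕ => (n : ℝ) * ((n : ℝ) + m)⁻¹) atTop (nhds 1) := by
  have h1 : Tendsto (fun n : ℕ => 1 - (m : ℝ) * ((n : ℝ) + m)⁻¹) atTop (nhds 1) := by
    have h0 := (eps_tendsto m).const_mul (m : ℝ)
    have h1 : Tendsto (fun _ : ℕ => (1 : ℝ)) atTop (nhds 1) := tendsto_const_nhds
    have h2 := h1.sub h0
    simpa using h2
  apply h1.congr'
  filter_upwards [eventually_ge_atTop 1] with n hn
  have hnm : ((n : ℝ) + m) ≠ 0 := by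
    have : (1 : ℝ) ≤ (n : ℝ) := by exact_mod_cast hn
    positivity
  field_simp
  ring

variable {d : ℕ → ℕ} {C t : ℝ} {m : ℕ}

lemma rs_le (hC : 1 ≤ C) (ht : 1 ≤ t) (hd : ∀ᶠ n in atTop, (d n : ℝ) ≤ C * t ^ n) :
    ∀ᶠ n in atTop, rs d m n ≤
      C ^ (((n : ℝ) + m)⁻¹) * t ^ ((n : ℝ) * ((n : ℝ) + m)⁻¹) ∧ rs d m n ≤ C * t := by
  filter_upwards [hd, eventually_ge_atTop 1] with n hdn hn
  have hn1 : (1 : ℝ) ≤ (n : ℝ) := by exact_mod_cast hn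
  have hm0 : (0 : ℝ) ≤ (m : ℝ) := Nat.cast_nonneg m
  have hnm : (1 : ℝ) ≤ (n : ℝ) + m := by linarith
  have hnm0 : (0 : ℝ) < (n : ℝ) + m := by linarith
  have he0 : 0 ≤ ((n : ℝ) + m)⁻¹ := by positivity
  have he1 : ((n : ℝ) + m)⁻¹ ≤ 1 := by
    rw [inv_le_one_iff₀]; right; exact hnm
  have hC0 : (0 : ℝ) ≤ C := by linarith
  have ht0 : (0 : ℝ) ≤ t := by linarith
  have step1 : rs d m n ≤ (C * t ^ n) ^ (((n : ℝ) + m)⁻¹) :=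
    Real.rpow_le_rpow (Nat.cast_nonneg _) hdn he0
  have step2 : (C * t ^ n) ^ (((n : ℝ) + m)⁻¹) =
      C ^ (((n : ℝ) + m)⁻¹) * t ^ ((n : ℝ) * ((n : ℝ) + m)⁻¹) := by
    rw [Real.mul_rpow hC0 (by positivity), ← Real.rpow_natCast t n,
      ← Real.rpow_mul ht0]
  have hmain : rs d m n ≤ C ^ (((n : ℝ) + m)⁻¹) * t ^ ((n : ℝ) * ((n : ℝ) + m)⁻¹) :=
    step2 ▸ step1
  refine ⟨hmain, hmain.trans ?_⟩
  have hg1 : (n : ℝ) * ((n : ℝ) + m)⁻¹ ≤ 1 := by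
    rw [← div_eq_mul_inv]
    exact div_le_one_of_le₀ (by linarith) (by linarith)
  have h3 : C ^ (((n : ℝ) + m)⁻¹) ≤ C := by
    calc C ^ (((n : ℝ) + m)⁻¹) ≤ C ^ (1 : ℝ) :=
      Real.rpow_le_rpow_of_exponent_le hC he1
    _ = C := Real.rpow_one C
  have h4 : t ^ ((n : ℝ) * ((n : ℝ) + m)⁻¹) ≤ t := by
    calc t ^ ((n : ℝ) * ((n : ℝ) + m)⁻¹) ≤ t ^ (1 : ℝ) :=
      Real.rpow_le_rpow_of_exponent_le ht hg1
    _ = t := Real.rpow_one t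
  exact mul_le_mul h3 h4 (Real.rpow_nonneg ht0 _) hC0

lemma rs_bounded (hC : 1 ≤ C) (ht : 1 ≤ t) (hd : ∀ᶠ n in atTop, (d n : ℝ) ≤ C * t ^ n) :
    IsBoundedUnder (· ≤ ·) atTop (rs d m) :=
  isBoundedUnder_of_eventually_le (a := C * t) ((rs_le hC ht hd).mono (fun _ h => h.2))

lemma rs_cobounded : IsCoboundedUnder (· ≤ ·) atTop (rs d m) :=
  isCoboundedUnder_le_of_eventually_le atTop
    (x := 0) (Eventually.of_forall (rs_nonneg d m))

lemma rs_limsup_le (hC : 1 ≤ C) (ht : 1 ≤ t) (hd : ∀ᶠ n in atTop, (d n : ℝ) ≤ C * t ^ n) :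
    limsup (rs d m) atTop ≤ t := by
  by_contra hcon
  push_neg at hcon
  obtain ⟨b, hb1, hb2⟩ := exists_between hcon
  have hC0 : C ≠ 0 := by intro h; rw [h] at hC; linarith
  have ht0 : t ≠ 0 := by intro h; rw [h] at ht; linarith
  have hW : Tendsto (fun n : ℕ => C ^ (((n : ℝ) + m)⁻¹) * t ^ ((n : ℝ) * ((n : ℝ) + m)⁻¹))
      atTop (nhds t) := by
    have h1 : Tendsto (fun n : ℕ => C ^ (((n : ℝ) + m)⁻¹)) atTop (nhds (C ^ (0 : ℝ))) :=
      Tendsto.rpow tendsto_const_nhds (eps_tendsto m) (Or.inl hC0)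
    have h2 : Tendsto (fun n : ℕ => t ^ ((n : ℝ) * ((n : ℝ) + m)⁻¹)) atTop
        (nhds (t ^ (1 : ℝ))) :=
      Tendsto.rpow tendsto_const_nhds (g_tendsto m) (Or.inl ht0)
    have := h1.mul h2
    simpa using this
  have hev : ∀ᶠ n in atTop, rs d m n < b := by
    filter_upwards [rs_le hC ht hd, hW.eventually_lt_const hb1] with n h1 h2
    exact lt_of_le_of_lt h1.1 h2
  have : limsup (rs d m) atTop ≤ b :=
    limsup_le_of_le rs_cobounded (hev.mono fun n h => h.le)
  exact absurd hb2 (not_lt.mpr this)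

lemma rs_rev (ht : 1 ≤ t) (hbd : IsBoundedUnder (· ≤ ·) atTop (rs d m))
    (hlt : limsup (rs d m) atTop < t) :
    ∀ᶠ n in atTop, (d n : ℝ) ≤ t ^ (m : ℕ) * t ^ n := by
  have hev := eventually_lt_of_limsup_lt hlt hbd
  filter_upwards [hev, eventually_ge_atTop 1] with n h1 hn
  have hn1 : (1 : ℝ) ≤ (n : ℝ) := by exact_mod_cast hn
  have hm0 : (0 : ℝ) ≤ (m : ℝ) := Nat.cast_nonneg m
  have hnm0 : (0 : ℝ) < (n : ℝ) + m := by linarith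
  have ht0 : (0 : ℝ) < t := by linarith
  have key : (d n : ℝ) = (rs d m n) ^ ((n : ℝ) + m) := by
    rw [rs, ← Real.rpow_mul (Nat.cast_nonneg _), inv_mul_cancel₀ (ne_of_gt hnm0),
      Real.rpow_one]
  rw [key]
  have h2 : (rs d m n) ^ ((n : ℝ) + m) ≤ t ^ ((n : ℝ) + m) :=
    Real.rpow_le_rpow (rs_nonneg d m n) h1.le (le_of_lt hnm0)
  refine h2.trans (le_of_eq ?_)
  rw [Real.rpow_add ht0, Real.rpow_natCast, Real.rpow_natCast, mul_comm]


lemma analysis_main (c : ℕ → ℕ) (L : ℕ) (hstep : ∀ n, c (n + 1) ≤ c n * L) :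
    limsup (fun n : ℕ => (c n : ℝ) ^ ((n : ℝ)⁻¹)) atTop =
      limsup (fun n : ℕ => (c (n + 1) : ℝ) ^ ((n : ℝ)⁻¹)) atTop ∧
    limsup (fun n : ℕ => (c n : ℝ) ^ ((n : ℝ)⁻¹)) atTop ≤ (L : ℝ) := by
  classical
  set u : ℕ → ℝ := fun n => (c n : ℝ) ^ ((n : ℝ)⁻¹) with hu
  have hglobal : ∀ n, c n ≤ c 0 * L ^ n := by
    intro n
    induction n with
    | zero => simp
    | succ n ih =>
      calc c (n + 1) ≤ c n * L := hstep n
      _ ≤ (c 0 * L ^ n) * L := Nat.mul_le_mul_right L ih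
      _ = c 0 * L ^ (n + 1) := by ring
  have part2 : limsup u atTop ≤ (L : ℝ) := by
    rcases Nat.eq_zero_or_pos L with hL | hL
    · have hzero : ∀ n, 1 ≤ n → c n = 0 := by
        intro n hn
        rcases Nat.exists_eq_add_of_le hn with ⟨m, rfl⟩
        have := hstep m
        simpa [hL, Nat.add_comm] using this
      have hev : ∀ᶠ n in atTop, u n = (fun _ : ℕ => (0 : ℝ)) n := by
        filter_upwards [eventually_ge_atTop 1] with n hn
        have hne : ((n : ℝ)⁻¹) ≠ 0 := by
          have : (n : ℝ) ≠ 0 := by exact_mod_cast Nat.one_le_iff_ne_zero.mp hn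
          simpa using this
        simp [hu, hzero n hn, Real.zero_rpow hne]
      rw [limsup_congr hev, limsup_const]
      simp
    · have hL1 : (1 : ℝ) ≤ (L : ℝ) := by exact_mod_cast hL
      set C := max (c 0) 1 with hC
      have hC1 : (1 : ℝ) ≤ (C : ℝ) := by
        have : 1 ≤ C := le_max_right _ 1
        exact_mod_cast this
      have hd : ∀ᶠ n in atTop, (c n : ℝ) ≤ (C : ℝ) * (L : ℝ) ^ n := by
        apply Eventually.of_forall
        intro n
        have h1 : (c n : ℝ) ≤ (c 0 : ℝ) * (L : ℝ) ^ n := by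
          have := hglobal n
          push_cast
          exact_mod_cast this
        refine h1.trans (mul_le_mul_of_nonneg_right ?_ (by positivity))
        exact_mod_cast le_max_left (c 0) 1
      have hls := rs_limsup_le (m := 0) hC1 hL1 hd
      have hfun : rs c 0 = u := funext fun n => by simp [rs, hu]
      rwa [hfun] at hls
  refine ⟨?_, part2⟩
  set d : ℕ → ℕ := fun n => c (n + 1) with hdd
  set t1 := max L 1 with ht1
  set C1 := max (c 0 * t1) 1 with hC1def
  have ht11 : (1 : ℝ) ≤ (t1 : ℝ) := by
    have : 1 ≤ t1 := le_max_right L 1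
    exact_mod_cast this
  have hC11 : (1 : ℝ) ≤ (C1 : ℝ) := by
    have : 1 ≤ C1 := le_max_right _ 1
    exact_mod_cast this
  have hdb : ∀ᶠ n in atTop, (d n : ℝ) ≤ (C1 : ℝ) * (t1 : ℝ) ^ n := by
    apply Eventually.of_forall
    intro n
    have h1 : d n ≤ C1 * t1 ^ n := by
      calc d n = c (n + 1) := rfl
      _ ≤ c 0 * L ^ (n + 1) := hglobal (n + 1)
      _ ≤ c 0 * t1 ^ (n + 1) :=
          Nat.mul_le_mul_left _ (Nat.pow_le_pow_left (le_max_left L 1) _)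
      _ = (c 0 * t1) * t1 ^ n := by ring
      _ ≤ C1 * t1 ^ n := Nat.mul_le_mul_right _ (le_max_left _ 1)
    calc (d n : ℝ) ≤ ((C1 * t1 ^ n : ℕ) : ℝ) := by exact_mod_cast h1
    _ = (C1 : ℝ) * (t1 : ℝ) ^ n := by push_cast; ring
  have hrhs : (fun n : ℕ => (c (n + 1) : ℝ) ^ ((n : ℝ)⁻¹)) = rs d 0 :=
    funext fun n => by simp [rs, hdd]
  have hshift : limsup u atTop = limsup (rs d 1) atTop := by
    rw [← Filter.limsup_nat_add u 1]
    apply congrArg (fun f => limsup f atTop)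
    funext i
    simp only [hu, rs, hdd]
    norm_num
  rw [hrhs, hshift]
  by_cases hdeg : ∀ᶠ n in atTop, d n = 0
  · have hev1 : ∀ᶠ n in atTop, rs d 1 n = (fun _ : ℕ => (0 : ℝ)) n := by
      filter_upwards [hdeg] with n hn
      have hne : (((n : ℝ) + 1)⁻¹) ≠ 0 := by positivity
      simp [rs, hn, Real.zero_rpow hne]
    have hev0 : ∀ᶠ n in atTop, rs d 0 n = (fun _ : ℕ => (0 : ℝ)) n := by
      filter_upwards [hdeg, eventually_ge_atTop 1] with n hn hn1
      have hne : ((n : ℝ))⁻¹ ≠ 0 := by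
        have : (1 : ℝ) ≤ (n : ℝ) := by exact_mod_cast hn1
        positivity
      simp [rs, hn, Real.zero_rpow hne]
    rw [limsup_congr hev1, limsup_congr hev0]
  · have hfreq : ∃ᶠ n in atTop, 1 ≤ d n := by
      rw [not_eventually] at hdeg
      exact hdeg.mono fun n h => Nat.one_le_iff_ne_zero.mpr h
    have hb0 : IsBoundedUnder (· ≤ ·) atTop (rs d 0) := rs_bounded hC11 ht11 hdb
    have hb1 : IsBoundedUnder (· ≤ ·) atTop (rs d 1) := rs_bounded hC11 ht11 hdb
    have hone : ∀ m : ℕ, (1 : ℝ) ≤ limsup (rs d m) atTop := by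
      intro m
      have hbm : IsBoundedUnder (· ≤ ·) atTop (rs d m) := rs_bounded hC11 ht11 hdb
      refine le_limsup_of_frequently_le ?_ hbm
      refine hfreq.mono fun n hn => ?_
      have h1 : (1 : ℝ) ≤ (d n : ℝ) := by exact_mod_cast hn
      have h2 : (0 : ℝ) ≤ ((n : ℝ) + m)⁻¹ := by positivity
      calc (1 : ℝ) = (1 : ℝ) ^ (((n : ℝ) + m)⁻¹) := (Real.one_rpow _).symm
      _ ≤ (d n : ℝ) ^ (((n : ℝ) + m)⁻¹) := Real.rpow_le_rpow zero_le_one h1 h2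
    have hle1 : limsup (rs d 0) atTop ≤ limsup (rs d 1) atTop := by
      by_contra hcon
      push_neg at hcon
      obtain ⟨b, hb, hb'⟩ := exists_between hcon
      have hb1' : (1 : ℝ) ≤ b := (hone 1).trans hb.le
      have hrev := rs_rev (m := 1) hb1' hb1 hb
      have : ∀ᶠ n in atTop, (d n : ℝ) ≤ b * b ^ n := by
        filter_upwards [hrev] with n h
        simpa [pow_one] using h
      have := rs_limsup_le (m := 0) hb1' hb1' this
      exact absurd hb' (not_lt.mpr this)
    have hle2 : limsup (rs d 1) atTop ≤ limsup (rs d 0) atTop := by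
      by_contra hcon
      push_neg at hcon
      obtain ⟨b, hb, hb'⟩ := exists_between hcon
      have hb1' : (1 : ℝ) ≤ b := (hone 0).trans hb.le
      have hrev := rs_rev (m := 0) hb1' hb0 hb
      have : ∀ᶠ n in atTop, (d n : ℝ) ≤ b * b ^ n := by
        filter_upwards [hrev] with n h
        have hb0' : (0 : ℝ) ≤ b ^ n := by positivity
        have : (d n : ℝ) ≤ 1 * b ^ n := by simpa [pow_zero] using h
        nlinarith
      have := rs_limsup_le (m := 1) hb1' hb1' this
      exact absurd hb' (not_lt.mpr this)
    exact le_antisymm hle2 hle1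

end LimsupTools


/-- Lemma 2.3: for a finite-dimensional local algebra `A` with radical `J` and a finite
length module `M` (with minimal projective resolution encoded as a syzygy tower
`M n = Ω^n M`), one has `γ(M) = γ(Ω M)` and `γ(M) ≤ |J|`, where
`γ(M) = limsup_n t_n(M)^{1/n}`. Note `γ(Ω M) = limsup_n t_{n+1}(M)^{1/n}`. -/
theorem stmt_2 (k A : Type*) [Field k] [Ring A] [Algebra k A] [FiniteDimensional k A]
    [IsLocalRing A]
    (M P : ℕ → Type*) [∀ n, AddCommGroup (M n)] [∀ n, Module A (M n)]
    [∀ n, Module.Finite A (M n)] [∀ n, AddCommGroup (P n)] [∀ n, Module A (P n)]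
    (f : ∀ n, P n →ₗ[A] M n) (hcover : ∀ n, IsProjCover A (f n))
    (hsyz : ∀ n, Nonempty (M (n + 1) ≃ₗ[A] LinearMap.ker (f n))) :
    Filter.limsup (fun n : ℕ => (betti A M n : ℝ) ^ ((n : ℝ)⁻¹)) Filter.atTop =
      Filter.limsup (fun n : ℕ => (betti A M (n + 1) : ℝ) ^ ((n : ℝ)⁻¹)) Filter.atTop ∧
    Filter.limsup (fun n : ℕ => (betti A M n : ℝ) ^ ((n : ℝ)⁻¹)) Filter.atTop ≤
      ((moduleLength A (Ideal.jacobson (⊥ : Ideal A))).toNat : ℝ) := by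
  classical
  have hstep : ∀ n, betti A M (n + 1) ≤ betti A M n *
      (moduleLength A ↥(Ideal.jacobson (⊥ : Ideal A))).toNat := by
    intro n
    obtain ⟨e⟩ := hsyz n
    have := betti_step k (f n) (hcover n).2.1 (hcover n).2.2 e
    simpa [betti] using this
  exact LimsupTools.analysis_main (fun n => betti A M n) _ hstep
end

section
/- Let ω : ℝ² → ℝ² be a linear transformation and x ∈ ℝ² a nonzero vector. If x is an eigenvector of ω with eigenvalue λ, then limsup_n |ω^n x|^{1/n} = |λ|. If x is not an eigenvector of ω, then limsup_n |ω^n x|^{1/n} equals the spectral radius ρ(ω), the maximum of the absolute values of the complex eigenvalues of ω. -/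
/-- The spectral radius of a real 2×2 matrix: the maximum of the absolute values of its
complex eigenvalues. -/
noncomputable def specRad (ω : Matrix (Fin 2) (Fin 2) ℝ) : ℝ :=
  sSup ((fun z : ℂ => ‖z‖) '' spectrum ℂ (ω.map Complex.ofReal))

/-- The growth rate `limsup_n |ω^n x|^{1/n}` where `|(x₁,x₂)| = |x₁| + |x₂|`. -/
noncomputable def growth (ω : Matrix (Fin 2) (Fin 2) ℝ) (x : Fin 2 → ℝ) : ℝ :=
  Filter.limsup
    (fun n : ℕ => (|((ω ^ n).mulVec x) 0| + |((ω ^ n).mulVec x) 1|) ^ ((n : ℝ)⁻¹))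
    Filter.atTop

open Filter Real Topology Finset
open scoped ENNReal NNReal

attribute [local instance] Matrix.linftyOpNormedRing Matrix.linftyOpNormedAlgebra

lemma aux_rpow_inv_tendsto_one {c : ℝ} (hc : 0 < c) :
    Tendsto (fun n : ℕ => c ^ ((n : ℝ)⁻¹)) atTop (𝓝 1) := by
  have h0 : Tendsto (fun n : ℕ => ((n : ℝ))⁻¹) atTop (𝓝 0) :=
    tendsto_inv_atTop_zero.comp tendsto_natCast_atTop_atTop
  have := (Real.continuousAt_const_rpow (ne_of_gt hc)).tendsto.comp h0
  simpa [Function.comp_def] using this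

lemma aux_limsup_eq {u t : ℕ → ℝ} (hu : ∀ n, 0 ≤ u n) (ht : ∀ n, 0 ≤ t n) {r : ℝ}
    (htr : Tendsto (fun n => t n ^ ((n : ℝ)⁻¹)) atTop (𝓝 r))
    {c₁ c₂ : ℝ} (hc₁ : 0 < c₁) (hc₂ : 0 < c₂)
    (h₁ : ∀ n, u n ≤ c₁ * t n) (h₂ : ∀ n, t n ≤ c₂ * (u n + u (n + 1))) :
    limsup (fun n => u n ^ ((n : ℝ)⁻¹)) atTop = r := by
  set w : ℕ → ℝ := fun n => u n ^ ((n : ℝ)⁻¹) with hw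
  have hwpos : ∀ n, 0 ≤ w n := fun n => Real.rpow_nonneg (hu n) _
  set b : ℕ → ℝ := fun n => c₁ ^ ((n : ℝ)⁻¹) * t n ^ ((n : ℝ)⁻¹) with hbdef
  have hwb : ∀ n, w n ≤ b n := by
    intro n
    have := Real.rpow_le_rpow (hu n) (h₁ n) (by positivity : (0:ℝ) ≤ ((n:ℝ))⁻¹)
    rwa [Real.mul_rpow hc₁.le (ht n)] at this
  have hb : Tendsto b atTop (𝓝 r) := by
    have := (aux_rpow_inv_tendsto_one hc₁).mul htr
    simpa using this
  have hbb : IsBoundedUnder (· ≤ ·) atTop b := hb.isBoundedUnder_le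
  have hwbound : IsBoundedUnder (· ≤ ·) atTop w :=
    hbb.mono_le (Eventually.of_forall hwb)
  have hcob : IsCoboundedUnder (· ≤ ·) atTop w :=
    Filter.isCoboundedUnder_le_of_le _ hwpos
  have hupper : limsup w atTop ≤ r := by
    have := Filter.limsup_le_limsup (Eventually.of_forall hwb) hcob hbb
    rwa [hb.limsup_eq] at this
  have hL0 : (0:ℝ) ≤ limsup w atTop :=
    Filter.le_limsup_of_frequently_le (Frequently.of_forall hwpos) hwbound
  refine le_antisymm hupper ?_
  by_contra hlt
  push_neg at hlt
  set L := limsup w atTop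
  set q : ℝ := (L + r) / 2 with hq
  have hLq : L < q := by rw [hq]; linarith
  have hqr : q < r := by rw [hq]; linarith
  have hq0 : 0 < q := by rw [hq]; linarith
  have hev : ∀ᶠ n in atTop, w n < q := Filter.eventually_lt_of_limsup_lt hLq hwbound
  have hun : ∀ᶠ n in atTop, u n ≤ q ^ (n : ℝ) := by
    filter_upwards [hev, eventually_ge_atTop 1] with n h1 h2
    have hne : ((n : ℝ)) ≠ 0 := by positivity
    have h5 : (u n ^ ((n:ℝ)⁻¹)) ^ ((n:ℝ)) ≤ q ^ ((n:ℝ)) :=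
      Real.rpow_le_rpow (hwpos n) h1.le (by positivity)
    rwa [← Real.rpow_mul (hu n), inv_mul_cancel₀ hne, Real.rpow_one] at h5
  have htq : ∀ᶠ n in atTop, t n ^ ((n : ℝ)⁻¹) ≤ (c₂ * (1 + q)) ^ ((n : ℝ)⁻¹) * q := by
    have hun' : ∀ᶠ n in atTop, u (n + 1) ≤ q ^ ((n : ℝ) + 1) := by
      have := (tendsto_add_atTop_nat 1).eventually hun
      filter_upwards [this] with n h
      convert h using 2
      push_cast; ring
    filter_upwards [hun, hun', eventually_ge_atTop 1] with n h1 h2 h3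
    have hne : ((n : ℝ)) ≠ 0 := by
      have : (1:ℝ) ≤ (n:ℝ) := by exact_mod_cast h3
      linarith
    have key : t n ≤ (c₂ * (1 + q)) * q ^ (n : ℝ) := by
      have := h₂ n
      have h4 : u n + u (n+1) ≤ q ^ (n:ℝ) + q ^ ((n:ℝ)+1) := by
        push_cast at this ⊢
        linarith [h1]
      have h5 : q ^ ((n:ℝ)+1) = q ^ (n:ℝ) * q := Real.rpow_add_one (ne_of_gt hq0) _
      nlinarith [Real.rpow_nonneg hq0.le (n:ℝ), hc₂]
    have := Real.rpow_le_rpow (ht n) key (by positivity : (0:ℝ) ≤ ((n:ℝ))⁻¹)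
    rwa [Real.mul_rpow (by positivity) (Real.rpow_nonneg hq0.le _),
      ← Real.rpow_mul hq0.le, mul_inv_cancel₀ hne, Real.rpow_one] at this
  have hlim2 : Tendsto (fun n : ℕ => (c₂ * (1 + q)) ^ ((n : ℝ)⁻¹) * q) atTop (𝓝 q) := by
    have := (aux_rpow_inv_tendsto_one (by positivity : (0:ℝ) < c₂ * (1 + q))).mul_const q
    simpa using this
  have : r ≤ q := le_of_tendsto_of_tendsto htr hlim2 htq
  linarith

lemma aux_gelfand (A : Matrix (Fin 2) (Fin 2) ℂ) :
    Tendsto (fun n : ℕ => ‖A ^ n‖ ^ ((n : ℝ)⁻¹)) atTop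
      (𝓝 (spectralRadius ℂ A).toReal) := by
  haveI : CompleteSpace (Matrix (Fin 2) (Fin 2) ℂ) := FiniteDimensional.complete ℂ _
  have hR : spectralRadius ℂ A ≠ ⊤ :=
    ((spectrum.spectralRadius_le_nnnorm (𝕜 := ℂ) A).trans_lt ENNReal.coe_lt_top).ne
  have h := spectrum.pow_nnnorm_pow_one_div_tendsto_nhds_spectralRadius A
  have h2 := (ENNReal.tendsto_toReal hR).comp h
  have h3 : (fun n : ℕ => (((‖A ^ n‖₊ : ℝ≥0∞)) ^ (1 / (n:ℝ))).toReal)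
      = fun n : ℕ => ‖A ^ n‖ ^ ((n : ℝ)⁻¹) := by
    funext n
    rw [← ENNReal.toReal_rpow, one_div]
    simp
  rwa [Function.comp_def, h3] at h2

lemma aux_specRad_eq (ω : Matrix (Fin 2) (Fin 2) ℝ) :
    specRad ω = (spectralRadius ℂ (ω.map Complex.ofReal)).toReal := by
  haveI : CompleteSpace (Matrix (Fin 2) (Fin 2) ℂ) := FiniteDimensional.complete ℂ _
  set A := ω.map Complex.ofReal with hA
  have hne : (spectrum ℂ A).Nonempty := spectrum.nonempty A
  have hcpt : IsCompact (spectrum ℂ A) := spectrum.isCompact A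
  have hcpt2 : IsCompact ((fun z : ℂ => ‖z‖) '' spectrum ℂ A) :=
    hcpt.image continuous_norm
  have hne2 : ((fun z : ℂ => ‖z‖) '' spectrum ℂ A).Nonempty := hne.image _
  have hmem : sSup ((fun z : ℂ => ‖z‖) '' spectrum ℂ A) ∈ (fun z : ℂ => ‖z‖) '' spectrum ℂ A :=
    hcpt2.sSup_mem hne2
  obtain ⟨k₀, hk₀, hk₀eq⟩ := hmem
  have hle : ∀ k ∈ spectrum ℂ A, ‖k‖ ≤ ‖k₀‖ := by
    intro k hk
    exact (le_csSup hcpt2.bddAbove ⟨k, hk, rfl⟩).trans_eq hk₀eq.symm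
  have hrad : spectralRadius ℂ A = (‖k₀‖₊ : ℝ≥0∞) := by
    apply le_antisymm
    · refine iSup₂_le fun k hk => ?_
      have := hle k hk
      simp only [ENNReal.coe_le_coe, ← NNReal.coe_le_coe, coe_nnnorm]
      exact this
    · exact le_iSup₂ (f := fun k (_ : k ∈ spectrum ℂ A) => (‖k‖₊ : ℝ≥0∞)) k₀ hk₀
  rw [specRad, hrad, ← hk₀eq]
  simp

lemma aux_map_ofReal_pow (M : Matrix (Fin 2) (Fin 2) ℝ) (n : ℕ) :
    (M.map Complex.ofReal) ^ n = (M ^ n).map Complex.ofReal := by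
  have : M.map Complex.ofReal = Complex.ofRealHom.mapMatrix M := rfl
  rw [this, ← map_pow]
  rfl

lemma aux_norm_map_le (M : Matrix (Fin 2) (Fin 2) ℝ) :
    ‖M.map Complex.ofReal‖ ≤ ∑ i, ∑ j, |M i j| := by
  set B := M.map Complex.ofReal with hB
  calc ‖B‖ = ((univ.sup fun i => ∑ j, ‖B i j‖₊ : ℝ≥0) : ℝ) := Matrix.linfty_opNorm_def B
    _ ≤ ((∑ i, ∑ j, ‖B i j‖₊ : ℝ≥0) : ℝ) := by
        exact_mod_cast NNReal.coe_le_coe.mpr (Finset.sup_le fun i _ =>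
          Finset.single_le_sum (fun _ _ => zero_le) (mem_univ i))
    _ = ∑ i, ∑ j, ‖B i j‖ := by push_cast; rfl
    _ = ∑ i, ∑ j, |M i j| := by
        simp [hB, Matrix.map_apply, Real.norm_eq_abs]

lemma aux_entry_le_norm (M : Matrix (Fin 2) (Fin 2) ℝ) (i j : Fin 2) :
    |M i j| ≤ ‖M.map Complex.ofReal‖ := by
  set B := M.map Complex.ofReal with hB
  have h1 : ‖B i j‖₊ ≤ univ.sup fun i => ∑ j, ‖B i j‖₊ := by
    refine le_trans ?_ (Finset.le_sup (f := fun i => ∑ j, ‖B i j‖₊) (mem_univ i))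
    exact Finset.single_le_sum (f := fun j => ‖B i j‖₊) (fun _ _ => zero_le) (mem_univ j)
  have h2 : (‖B i j‖₊ : ℝ) ≤ ‖B‖ := by
    rw [Matrix.linfty_opNorm_def B]
    exact_mod_cast h1
  calc |M i j| = ‖B i j‖ := by simp [hB, Matrix.map_apply, Real.norm_eq_abs]
    _ ≤ ‖B‖ := h2

set_option maxHeartbeats 2000000 in
/-- Lemma 5.2: if `x ≠ 0` is an eigenvector of `ω` with eigenvalue `λ`, then the growth of
the iterates `ω^n x` is `|λ|`; if `x` is not an eigenvector, the growth equals the spectral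
radius of `ω`. -/
theorem stmt_5 (ω : Matrix (Fin 2) (Fin 2) ℝ) (x : Fin 2 → ℝ) (hx : x ≠ 0) :
    (∀ lam : ℝ, ω.mulVec x = lam • x → growth ω x = |lam|) ∧
    ((¬ ∃ lam : ℝ, ω.mulVec x = lam • x) → growth ω x = specRad ω) := by
  have hexp : ∀ (M : Matrix (Fin 2) (Fin 2) ℝ) (v : Fin 2 → ℝ) (i : Fin 2),
      (M.mulVec v) i = M i 0 * v 0 + M i 1 * v 1 := by
    intro M v i
    simp [Matrix.mulVec, dotProduct, Fin.sum_univ_two]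
  have hc0 : 0 < |x 0| + |x 1| := by
    by_contra h
    push_neg at h
    have ha := abs_nonneg (x 0); have hb := abs_nonneg (x 1)
    have h0 : x 0 = 0 := abs_eq_zero.mp (by linarith)
    have h1 : x 1 = 0 := abs_eq_zero.mp (by linarith)
    apply hx
    funext i
    fin_cases i <;> simpa [h0, h1]
  constructor
  · -- eigenvector case
    intro lam hlam
    have key : ∀ n : ℕ, (ω ^ n).mulVec x = (lam ^ n) • x := by
      intro n
      induction n with
      | zero => simp [Matrix.one_mulVec]
      | succ n ih =>
        rw [pow_succ, ← Matrix.mulVec_mulVec, hlam, Matrix.mulVec_smul, ih,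
          smul_smul, ← pow_succ']
    set c : ℝ := |x 0| + |x 1| with hc
    have hval : ∀ n : ℕ, |((ω ^ n).mulVec x) 0| + |((ω ^ n).mulVec x) 1|
        = |lam| ^ n * c := by
      intro n
      rw [key n]
      simp only [Pi.smul_apply, smul_eq_mul, abs_mul, abs_pow, hc]
      ring
    have htend : Tendsto
        (fun n : ℕ => (|((ω ^ n).mulVec x) 0| + |((ω ^ n).mulVec x) 1|) ^ ((n : ℝ)⁻¹))
        atTop (𝓝 |lam|) := by
      have hlim : Tendsto (fun n : ℕ => |lam| * c ^ ((n : ℝ)⁻¹)) atTop (𝓝 (|lam| * 1)) :=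
        (aux_rpow_inv_tendsto_one hc0).const_mul |lam|
      rw [mul_one] at hlim
      apply hlim.congr'
      filter_upwards [eventually_ge_atTop 1] with n hn
      have hne : ((n : ℝ)) ≠ 0 := by positivity
      rw [hval n, Real.mul_rpow (by positivity) hc0.le,
        ← Real.rpow_natCast |lam| n, ← Real.rpow_mul (abs_nonneg lam),
        mul_inv_cancel₀ hne, Real.rpow_one]
    exact htend.limsup_eq
  · -- non-eigenvector case
    intro hnot
    set y : Fin 2 → ℝ := ω.mulVec x with hy
    set d : ℝ := x 0 * y 1 - x 1 * y 0 with hd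
    have hdne : d ≠ 0 := by
      intro hd0
      apply hnot
      by_cases hx0 : x 0 ≠ 0
      · refine ⟨y 0 / x 0, ?_⟩
        funext i
        fin_cases i <;> simp only [Pi.smul_apply, smul_eq_mul, Fin.zero_eta, Fin.mk_one]
        · field_simp
        · rw [hd] at hd0
          field_simp
          nlinarith [hd0]
      · push_neg at hx0
        have hx1 : x 1 ≠ 0 := by
          intro hx1
          apply hx; funext i; fin_cases i <;> simpa [hx0, hx1]
        refine ⟨y 1 / x 1, ?_⟩
        funext i
        fin_cases i <;> simp only [Pi.smul_apply, smul_eq_mul, Fin.zero_eta, Fin.mk_one]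
        · rw [hd, hx0] at hd0
          have hz : x 1 * y 0 = 0 := by linarith
          have : y 0 = 0 := (mul_eq_zero.mp hz).resolve_left hx1
          simp [this, hx0]
        · field_simp
    set u : ℕ → ℝ := fun n => |((ω ^ n).mulVec x) 0| + |((ω ^ n).mulVec x) 1| with hu
    set t : ℕ → ℝ := fun n => ‖(ω.map Complex.ofReal) ^ n‖ with ht
    have hupos : ∀ n, 0 ≤ u n := fun n => by positivity
    have htpos : ∀ n, 0 ≤ t n := fun n => norm_nonneg _
    have habs : 0 < |d| := abs_pos.mpr hdne
    set K : ℝ := |x 0| + |x 1| + |y 0| + |y 1| with hK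
    have hKpos : 0 ≤ K := by positivity
    -- h₁ : u n ≤ c₁ * t n
    have h₁ : ∀ n, u n ≤ (2 * (|x 0| + |x 1|) + 1) * t n := by
      intro n
      have e00 := aux_entry_le_norm (ω ^ n) 0 0
      have e01 := aux_entry_le_norm (ω ^ n) 0 1
      have e10 := aux_entry_le_norm (ω ^ n) 1 0
      have e11 := aux_entry_le_norm (ω ^ n) 1 1
      rw [← aux_map_ofReal_pow] at e00 e01 e10 e11
      have t0 : |((ω ^ n).mulVec x) 0| ≤ |(ω ^ n) 0 0| * |x 0| + |(ω ^ n) 0 1| * |x 1| := by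
        rw [hexp]
        exact (abs_add_le _ _).trans (by rw [abs_mul, abs_mul])
      have t1 : |((ω ^ n).mulVec x) 1| ≤ |(ω ^ n) 1 0| * |x 0| + |(ω ^ n) 1 1| * |x 1| := by
        rw [hexp]
        exact (abs_add_le _ _).trans (by rw [abs_mul, abs_mul])
      have hn0 := htpos n
      simp only [hu, ht] at *
      nlinarith [abs_nonneg (x 0), abs_nonneg (x 1), abs_nonneg ((ω ^ n) 0 0),
        abs_nonneg ((ω ^ n) 0 1), abs_nonneg ((ω ^ n) 1 0), abs_nonneg ((ω ^ n) 1 1)]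
    -- h₂ : t n ≤ c₂ * (u n + u (n+1))
    have h₂ : ∀ n, t n ≤ (4 * K / |d| + 1) * (u n + u (n + 1)) := by
      intro n
      set M : Matrix (Fin 2) (Fin 2) ℝ := ω ^ n with hM
      have hQ : ∀ i, (M.mulVec y) i = ((ω ^ (n + 1)).mulVec x) i := by
        intro i
        rw [hy, Matrix.mulVec_mulVec, ← pow_succ]
      have hP0 : (M.mulVec x) 0 = M 0 0 * x 0 + M 0 1 * x 1 := hexp M x 0
      have hP1 : (M.mulVec x) 1 = M 1 0 * x 0 + M 1 1 * x 1 := hexp M x 1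
      have hQ0 : (M.mulVec y) 0 = M 0 0 * y 0 + M 0 1 * y 1 := hexp M y 0
      have hQ1 : (M.mulVec y) 1 = M 1 0 * y 0 + M 1 1 * y 1 := hexp M y 1
      -- entry formulas via Cramer
      have hm00 : M 0 0 * d = (M.mulVec x) 0 * y 1 - (M.mulVec y) 0 * x 1 := by
        rw [hP0, hQ0, hd]; ring
      have hm10 : M 1 0 * d = (M.mulVec x) 1 * y 1 - (M.mulVec y) 1 * x 1 := by
        rw [hP1, hQ1, hd]; ring
      have hm01 : M 0 1 * d = (M.mulVec y) 0 * x 0 - (M.mulVec x) 0 * y 0 := by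
        rw [hP0, hQ0, hd]; ring
      have hm11 : M 1 1 * d = (M.mulVec y) 1 * x 0 - (M.mulVec x) 1 * y 0 := by
        rw [hP1, hQ1, hd]; ring
      have hun : u n = |(M.mulVec x) 0| + |(M.mulVec x) 1| := rfl
      have hun1 : u (n + 1) = |(M.mulVec y) 0| + |(M.mulVec y) 1| := by
        rw [hu]; simp only [hQ 0, hQ 1]
      -- generic entry bound
      have entry_bound : ∀ (z p q α β a b : ℝ), z * d = p * α - q * β →
          |p| ≤ a → |q| ≤ b → |α| ≤ K → |β| ≤ K →
          |z| ≤ K * (a + b) / |d| := by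
        intro z p q α β a b heq hp hq hα hβ
        have ha : 0 ≤ a := (abs_nonneg p).trans hp
        have hb : 0 ≤ b := (abs_nonneg q).trans hq
        rw [le_div_iff₀ habs]
        have h1 : |z| * |d| = |p * α - q * β| := by rw [← abs_mul, heq]
        have h2 : |p * α - q * β| ≤ |p| * |α| + |q| * |β| := by
          calc |p * α - q * β| ≤ |p * α| + |q * β| := abs_sub _ _
            _ = |p| * |α| + |q| * |β| := by rw [abs_mul, abs_mul]
        have h3 : |p| * |α| ≤ a * K := mul_le_mul hp hα (abs_nonneg α) ha
        have h4 : |q| * |β| ≤ b * K := mul_le_mul hq hβ (abs_nonneg β) hb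
        nlinarith [h1, h2, h3, h4]
      have habs0 := abs_nonneg ((M.mulVec x) 0)
      have habs1 := abs_nonneg ((M.mulVec x) 1)
      have habs2 := abs_nonneg ((M.mulVec y) 0)
      have habs3 := abs_nonneg ((M.mulVec y) 1)
      have hPle0 : |(M.mulVec x) 0| ≤ u n := by rw [hun]; linarith
      have hPle1 : |(M.mulVec x) 1| ≤ u n := by rw [hun]; linarith
      have hQle0 : |(M.mulVec y) 0| ≤ u (n + 1) := by rw [hun1]; linarith
      have hQle1 : |(M.mulVec y) 1| ≤ u (n + 1) := by rw [hun1]; linarith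
      have hax0 : |x 0| ≤ K := by
        rw [hK]; have := abs_nonneg (x 1); have := abs_nonneg (y 0)
        have := abs_nonneg (y 1); linarith
      have hax1 : |x 1| ≤ K := by
        rw [hK]; have := abs_nonneg (x 0); have := abs_nonneg (y 0)
        have := abs_nonneg (y 1); linarith
      have hay0 : |y 0| ≤ K := by
        rw [hK]; have := abs_nonneg (x 0); have := abs_nonneg (x 1)
        have := abs_nonneg (y 1); linarith
      have hay1 : |y 1| ≤ K := by
        rw [hK]; have := abs_nonneg (x 0); have := abs_nonneg (x 1)
        have := abs_nonneg (y 0); linarith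
      have b00 := entry_bound (M 0 0) _ _ _ _ _ _ hm00 hPle0 hQle0 hay1 hax1
      have b10 := entry_bound (M 1 0) _ _ _ _ _ _ hm10 hPle1 hQle1 hay1 hax1
      have b01' := entry_bound (M 0 1) _ _ _ _ _ _ hm01 hQle0 hPle0 hax0 hay0
      have b11' := entry_bound (M 1 1) _ _ _ _ _ _ hm11 hQle1 hPle1 hax0 hay0
      have b01 : |M 0 1| ≤ K * (u n + u (n + 1)) / |d| := by
        rw [add_comm (u n)]; exact b01'
      have b11 : |M 1 1| ≤ K * (u n + u (n + 1)) / |d| := by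
        rw [add_comm (u n)]; exact b11'
      have hnorm : t n ≤ |M 0 0| + |M 0 1| + (|M 1 0| + |M 1 1|) := by
        have h := aux_norm_map_le M
        simp only [Fin.sum_univ_two] at h
        have heq : t n = ‖M.map Complex.ofReal‖ := by
          simp only [ht, hM, aux_map_ofReal_pow]
        rw [heq]
        linarith
      have hsum : 0 ≤ u n + u (n + 1) := by positivity
      calc t n ≤ |M 0 0| + |M 0 1| + (|M 1 0| + |M 1 1|) := hnorm
        _ ≤ 4 * (K * (u n + u (n + 1)) / |d|) := by linarith
        _ = (4 * K / |d|) * (u n + u (n + 1)) := by ring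
        _ ≤ (4 * K / |d| + 1) * (u n + u (n + 1)) :=
            mul_le_mul_of_nonneg_right (by linarith) hsum
    -- conclude
    have hc₁ : (0:ℝ) < 2 * (|x 0| + |x 1|) + 1 := by positivity
    have hc₂ : (0:ℝ) < 4 * K / |d| + 1 := by positivity
    have htr : Tendsto (fun n => t n ^ ((n : ℝ)⁻¹)) atTop
        (𝓝 (spectralRadius ℂ (ω.map Complex.ofReal)).toReal) :=
      aux_gelfand (ω.map Complex.ofReal)
    have hmain := aux_limsup_eq hupos htpos htr hc₁ hc₂ h₁ h₂
    rw [aux_specRad_eq]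
    exact hmain
end

section
/- Let ω : ℝ² → ℝ² be a linear transformation and x ∈ ℝ² a vector with ω^n x > 0 (both coordinates positive) for all n ≥ 0. Then ω has real eigenvalues. Moreover, if x is an eigenvector with eigenvalue λ, then λ > 0; and if x is not an eigenvector, then the spectral radius ρ(ω) is itself an eigenvalue of ω. -/
open Real in
private lemma cos_lemma' (θ φ : ℝ) (h0 : 0 < θ) (hπ : θ ≤ π) : ∃ n : ℕ, Real.cos (n * θ + φ) ≤ 0 := by
  classical
  obtain ⟨k, hk⟩ := exists_nat_ge ((φ - π/2) / (2*π))
  set c : ℝ := π/2 + 2*π*k with hc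
  have hφc : φ ≤ c := by
    have h2π : (0:ℝ) < 2*π := by positivity
    rw [div_le_iff₀ h2π] at hk
    simp only [hc]; linarith
  have hne : ∃ n : ℕ, c ≤ n * θ + φ := by
    obtain ⟨n, hn⟩ := exists_nat_ge ((c - φ)/θ)
    exact ⟨n, by rw [div_le_iff₀ h0] at hn; linarith⟩
  set n := Nat.find hne with hn
  have h1 : c ≤ n * θ + φ := Nat.find_spec hne
  have h2 : n * θ + φ ≤ c + π := by
    rcases Nat.eq_zero_or_pos n with h | h
    · rw [h]; push_cast; nlinarith [pi_pos]
    · have := Nat.find_min hne (m := n - 1) (by omega)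
      push_neg at this
      have hcast : ((n - 1 : ℕ) : ℝ) = (n : ℝ) - 1 := by
        have : 1 ≤ n := h
        push_cast [this]; ring
      rw [hcast] at this
      nlinarith
  refine ⟨n, ?_⟩
  have key : Real.cos ((n * θ + φ) - (k:ℤ) * (2*π)) ≤ 0 := by
    apply Real.cos_nonpos_of_pi_div_two_le_of_le
    · push_cast; simp only [hc] at h1; linarith
    · push_cast; simp only [hc] at h2; linarith
  rwa [Real.cos_sub_int_mul_two_pi] at key

private lemma disc_nonneg' (T D : ℝ) (u : ℕ → ℝ)
    (hrec : ∀ n, u (n+2) = T * u (n+1) - D * u n) (hu : ∀ n, 0 < u n) :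
    0 ≤ T^2 - 4*D := by
  by_contra h
  push_neg at h
  have hD : 0 < D := by nlinarith
  set r := Real.sqrt D with hrdef
  have hr : 0 < r := Real.sqrt_pos.mpr hD
  have hr2 : r^2 = D := Real.sq_sqrt hD.le
  have habs : -1 < T/(2*r) ∧ T/(2*r) < 1 := by
    constructor <;> [rw [lt_div_iff₀ (by linarith)]; rw [div_lt_iff₀ (by linarith)]] <;> nlinarith
  set θ := Real.arccos (T/(2*r)) with hθdef
  have hcos : Real.cos θ = T/(2*r) := Real.cos_arccos habs.1.le habs.2.le
  have hθ1 : 0 < θ := Real.arccos_pos.mpr habs.2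
  have hθ2 : θ < Real.pi := by
    refine lt_of_le_of_ne (Real.arccos_le_pi _) (fun hθπ => ?_)
    rw [hθπ, Real.cos_pi] at hcos
    linarith [habs.1]
  have hsin : 0 < Real.sin θ := Real.sin_pos_of_pos_of_lt_pi hθ1 hθ2
  have hT' : T = 2*r*Real.cos θ := by rw [hcos]; field_simp
  have hDr : D = r^2 := hr2.symm
  set A := u 0 with hA
  set B := (u 1 - r * Real.cos θ * u 0) / (r * Real.sin θ) with hB
  set v : ℕ → ℝ := fun n => r^n * (A * Real.cos (n*θ) + B * Real.sin (n*θ)) with hv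
  have key : ∀ n, u n = v n ∧ u (n+1) = v (n+1) := by
    intro n
    induction n with
    | zero =>
      constructor
      · simp [hv, hA]
      · have : B * (r * Real.sin θ) = u 1 - r * Real.cos θ * u 0 := by
          rw [hB]; field_simp
        simp only [hv]; push_cast; simp only [Nat.cast_one, one_mul, pow_one]
        nlinarith [this]
    | succ m ih =>
      refine ⟨ih.2, ?_⟩
      have hrw : u (m+2) = T * u (m+1) - D * u m := hrec m
      rw [hrw, ih.1, ih.2]
      simp only [hv]
      push_cast
      have e2 : ((m:ℝ)+1+1)*θ = ((m:ℝ)+1)*θ + θ := by ring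
      have e0 : (m:ℝ)*θ = ((m:ℝ)+1)*θ - θ := by ring
      rw [e2, e0, Real.cos_add, Real.sin_add, Real.cos_sub, Real.sin_sub, hT', hDr]
      ring
  set z : ℂ := ⟨A, B⟩ with hz
  have hzre : z.re = A := rfl
  have hzim : z.im = B := rfl
  have hzne : z ≠ 0 := by
    intro hzz
    rw [hzz] at hzre
    simp at hzre
    have := hu 0
    rw [← hA, ← hzre] at this
    exact lt_irrefl 0 this
  have hca : Real.cos (Complex.arg z) = A / ‖z‖ := by
    rw [Complex.cos_arg hzne, hzre]
  have hsa : Real.sin (Complex.arg z) = B / ‖z‖ := by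
    rw [Complex.sin_arg, hzim]
  have habsz : 0 < ‖z‖ := norm_pos_iff.mpr hzne
  obtain ⟨n, hn⟩ := cos_lemma' θ (-Complex.arg z) hθ1 hθ2.le
  have hvn : v n ≤ 0 := by
    have heq : A * Real.cos (n*θ) + B * Real.sin (n*θ)
        = ‖z‖ * Real.cos (n*θ + (- Complex.arg z)) := by
      have e : (n:ℝ)*θ + (- Complex.arg z) = n*θ - Complex.arg z := by ring
      rw [e, Real.cos_sub, hca, hsa]
      field_simp
    simp only [hv]
    rw [heq, ← mul_assoc]
    exact mul_nonpos_of_nonneg_of_nonpos (mul_nonneg (pow_nonneg hr.le n) habsz.le) hn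
  have := hu n
  rw [(key n).1] at this
  linarith

private lemma neg_trace' (T D : ℝ) (u : ℕ → ℝ) (hT : T < 0) (hΔ : 0 ≤ T^2 - 4*D)
    (hrec : ∀ n, u (n+2) = T * u (n+1) - D * u n) (hu : ∀ n, 0 < u n) :
    u 1 = ((T + Real.sqrt (T^2 - 4*D))/2) * u 0 := by
  set s := Real.sqrt (T^2 - 4*D) with hsdef
  have hs0 : 0 ≤ s := Real.sqrt_nonneg _
  have hs2 : s^2 = T^2 - 4*D := Real.sq_sqrt hΔ
  set lp := (T + s)/2 with hlp
  set lm := (T - s)/2 with hlm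
  have hsum : lp + lm = T := by rw [hlp, hlm]; ring
  have hprod : lp * lm = D := by rw [hlp, hlm]; nlinarith
  have hmneg : lm < 0 := by rw [hlm]; linarith
  rcases eq_or_lt_of_le hs0 with hs | hs
  · -- repeated root case: contradiction
    exfalso
    have hlpm : lp = lm := by rw [hlp, hlm, ← hs]; ring
    have hrec1 : u 2 = T * u 1 - D * u 0 := hrec 0
    -- w0 := u 1 - lm * u 0 > 0, w1 = lm * w0 < 0 but w1 = u 2 - lm * u 1 > 0
    have hw0 : 0 < u 1 - lm * u 0 := by nlinarith [hu 0, hu 1]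
    have hw1 : u 2 - lm * u 1 = lm * (u 1 - lm * u 0) := by
      rw [hrec1, ← hsum, ← hprod, hlpm]; ring
    nlinarith [hu 1, hu 2]
  · -- distinct roots
    have hlplm : lm < lp := by rw [hlp, hlm]; linarith
    set v0 := u 1 - lp * u 0 with hv0
    set w0 := u 1 - lm * u 0 with hw0
    have hvn : ∀ n, u (n+1) - lp * u n = lm^n * v0 := by
      intro n
      induction n with
      | zero => simp [hv0]
      | succ m ih =>
        have : u (m+2) - lp * u (m+1) = lm * (u (m+1) - lp * u m) := by
          rw [hrec m, ← hsum, ← hprod]; ring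
        rw [this, ih, pow_succ]; ring
    have hwn : ∀ n, u (n+1) - lm * u n = lp^n * w0 := by
      intro n
      induction n with
      | zero => simp [hw0]
      | succ m ih =>
        have : u (m+2) - lm * u (m+1) = lp * (u (m+1) - lm * u m) := by
          rw [hrec m, ← hsum, ← hprod]; ring
        rw [this, ih, pow_succ]; ring
    -- suffices v0 = 0
    suffices hv00 : v0 = 0 by
      have := hvn 0
      simp [hv00] at this
      linarith
    by_contra hv00
    have habslt : |lp| < -lm := by
      rw [abs_lt]; constructor <;> [skip; rw [hlp, hlm]] <;> [nlinarith; linarith]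
    have hmabs : (0:ℝ) < -lm := lt_of_le_of_lt (abs_nonneg lp) habslt
    set q := |lp| / (-lm) with hq
    have hq0 : 0 ≤ q := by positivity
    have hq1 : q < 1 := by rw [hq, div_lt_one hmabs]; exact habslt
    have hlim : Filter.Tendsto (fun n : ℕ => q^n * |w0|) Filter.atTop (nhds 0) := by
      have := tendsto_pow_atTop_nhds_zero_of_lt_one hq0 hq1
      simpa using this.mul_const |w0|
    have hev : ∀ᶠ n : ℕ in Filter.atTop, q^n * |w0| < |v0| :=
      hlim.eventually (gt_mem_nhds (abs_pos.mpr hv00))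
    obtain ⟨N, hN⟩ := Filter.eventually_atTop.mp hev
    have key : ∀ n, N ≤ n → lm^n * v0 < 0 := by
      intro n hn
      have h1 : |lp^n * w0| < |lm^n * v0| := by
        rw [abs_mul, abs_mul, abs_pow, abs_pow]
        have h2 : |lm| = -lm := abs_of_neg hmneg
        rw [h2]
        have := hN n hn
        rw [hq, div_pow] at this
        have hpos : (0:ℝ) < (-lm)^n := pow_pos hmabs n
        rw [div_mul_eq_mul_div, div_lt_iff₀ hpos] at this
        linarith [this]
      have h3 : (lp - lm) * u n = lp^n * w0 - lm^n * v0 := by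
        have := hwn n; have h4 := hvn n
        nlinarith [this, h4]
      have h5 : lm^n * v0 < lp^n * w0 := by
        nlinarith [hu n, mul_pos (sub_pos.mpr hlplm) (hu n)]
      have h6 : lm^n * v0 < |lm^n * v0| :=
        calc lm^n * v0 < lp^n * w0 := h5
          _ ≤ |lp^n * w0| := le_abs_self _
          _ < |lm^n * v0| := h1
      rcases lt_or_ge (lm^n * v0) 0 with h7 | h7
      · exact h7
      · rw [abs_of_nonneg h7] at h6; exact absurd h6 (lt_irrefl _)
    have k1 := key N le_rfl
    have k2 := key (N+1) (by omega)
    rw [pow_succ] at k2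
    have k3 : 0 < lm * (lm^N * v0) := mul_pos_of_neg_of_neg hmneg k1
    have k4 : lm * (lm^N * v0) = lm^N * lm * v0 := by ring
    linarith [k2, k3, k4]

/-- Lemma 5.3 (a 2-dimensional Perron–Frobenius variant): if `ω^n x > 0` (coordinatewise)
for all `n ≥ 0`, then all complex eigenvalues of `ω` are real; if `x` is an eigenvector
with eigenvalue `λ`, then `λ > 0`; and if `x` is not an eigenvector, then the spectral
radius of `ω` is an eigenvalue of `ω`. -/
theorem stmt_6 (ω : Matrix (Fin 2) (Fin 2) ℝ) (x : Fin 2 → ℝ)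
    (hpos : ∀ n : ℕ, ∀ i : Fin 2, 0 < ((ω ^ n).mulVec x) i) :
    (∀ z ∈ spectrum ℂ (ω.map Complex.ofReal), z.im = 0) ∧
    (∀ lam : ℝ, ω.mulVec x = lam • x → 0 < lam) ∧
    ((¬ ∃ lam : ℝ, ω.mulVec x = lam • x) → specRad ω ∈ spectrum ℝ ω) := by
  classical
  set T : ℝ := ω 0 0 + ω 1 1 with hTdef
  set D : ℝ := ω 0 0 * ω 1 1 - ω 0 1 * ω 1 0 with hDdef
  have hCH : ω * ω = T • ω - D • (1 : Matrix (Fin 2) (Fin 2) ℝ) := by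
    ext i j
    fin_cases i <;> fin_cases j <;>
      simp [Matrix.mul_apply, Fin.sum_univ_two, Matrix.one_apply, hTdef, hDdef] <;> ring
  set u : Fin 2 → ℕ → ℝ := fun i n => ((ω ^ n).mulVec x) i with hu
  have hrec : ∀ i : Fin 2, ∀ n, u i (n+2) = T * u i (n+1) - D * u i n := by
    intro i n
    have hpow : ω ^ (n+2) = (ω * ω) * ω ^ n := by
      rw [← pow_two, ← pow_add, add_comm]
    have hpow1 : ω ^ (n+1) = ω * ω ^ n := by rw [pow_succ']
    simp only [hu, hpow, hpow1, hCH, ← Matrix.mulVec_mulVec, Matrix.sub_mulVec,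
      Matrix.smul_mulVec, Matrix.one_mulVec, Pi.sub_apply, Pi.smul_apply, smul_eq_mul]
  have hupos : ∀ i : Fin 2, ∀ n, 0 < u i n := fun i n => hpos n i
  have hΔ : 0 ≤ T^2 - 4*D := disc_nonneg' T D (u 0) (hrec 0) (hupos 0)
  set s : ℝ := Real.sqrt (T^2 - 4*D) with hsdef
  have hs0 : 0 ≤ s := Real.sqrt_nonneg _
  have hs2 : s^2 = T^2 - 4*D := Real.sq_sqrt hΔ
  set lp : ℝ := (T + s)/2 with hlp
  set lm : ℝ := (T - s)/2 with hlm
  have hsum : lp + lm = T := by rw [hlp, hlm]; ring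
  have hprod : lp * lm = D := by rw [hlp, hlm]; linear_combination (-1/4 : ℝ) * hs2
  have hchar : ∀ z : ℂ, z ∈ spectrum ℂ (ω.map Complex.ofReal) ↔
      (z - ω 0 0) * (z - ω 1 1) - ω 0 1 * ω 1 0 = 0 := by
    intro z
    rw [spectrum.mem_iff, Matrix.isUnit_iff_isUnit_det, isUnit_iff_ne_zero, not_not]
    have halg : (algebraMap ℂ (Matrix (Fin 2) (Fin 2) ℂ)) z = z • (1 : Matrix (Fin 2) (Fin 2) ℂ) :=
      Algebra.algebraMap_eq_smul_one z
    rw [halg, Matrix.det_fin_two]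
    simp only [Matrix.sub_apply, Matrix.smul_apply, Matrix.one_apply, Matrix.map_apply,
      if_pos rfl, smul_eq_mul, mul_one, if_true]
    rw [if_neg (by decide : ¬((0:Fin 2) = 1)), if_neg (by decide : ¬((1:Fin 2) = 0))]
    constructor <;> intro h <;> linear_combination h
  have hsumC : (lp : ℂ) + (lm : ℂ) = ((ω 0 0 : ℝ) : ℂ) + ((ω 1 1 : ℝ) : ℂ) := by
    rw [hTdef] at hsum; exact_mod_cast congrArg (fun t : ℝ => (t : ℂ)) hsum
  have hprodC : (lp : ℂ) * (lm : ℂ)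
      = ((ω 0 0 : ℝ) : ℂ) * ((ω 1 1 : ℝ) : ℂ) - ((ω 0 1 : ℝ) : ℂ) * ((ω 1 0 : ℝ) : ℂ) := by
    rw [hDdef] at hprod; exact_mod_cast congrArg (fun t : ℝ => (t : ℂ)) hprod
  have hspec : spectrum ℂ (ω.map Complex.ofReal) = {(lp : ℂ), (lm : ℂ)} := by
    ext z
    rw [hchar z]
    have e : (z - ω 0 0) * (z - ω 1 1) - ω 0 1 * ω 1 0 = (z - lp) * (z - lm) := by
      linear_combination z * hsumC - hprodC
    rw [e, mul_eq_zero, sub_eq_zero, sub_eq_zero]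
    simp [Set.mem_insert_iff]
  refine ⟨?_, ?_, ?_⟩
  · intro z hz
    rw [hspec] at hz
    rcases hz with hz | hz <;> simp_all
  · intro lam hl
    have h0 : 0 < x 0 := by
      have := hpos 0 0
      simpa [Matrix.one_mulVec] using this
    have h1 : 0 < lam * x 0 := by
      have := hpos 1 0
      rw [pow_one, hl] at this
      simpa using this
    nlinarith
  · intro hnot
    have hTnn : 0 ≤ T := by
      by_contra hneg
      push_neg at hneg
      have heig : ∀ i : Fin 2, u i 1 = lp * u i 0 := by
        intro i
        have := neg_trace' T D (u i) hneg hΔ (hrec i) (hupos i)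
        rw [this, hlp]
      apply hnot
      refine ⟨lp, funext fun i => ?_⟩
      have := heig i
      simp only [hu, pow_one, pow_zero, Matrix.one_mulVec] at this
      simpa [Pi.smul_apply, smul_eq_mul] using this
    have hlp0 : 0 ≤ lp := by rw [hlp]; positivity
    have hlm_le : |lm| ≤ lp := by
      rw [abs_le]; constructor <;> [skip; rw [hlp, hlm]] <;> [linarith; linarith]
    have hsr : specRad ω = lp := by
      rw [specRad, hspec, Set.image_insert_eq, Set.image_singleton,
        Complex.norm_real, Complex.norm_real, Real.norm_eq_abs, Real.norm_eq_abs, csSup_pair]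
      rw [abs_of_nonneg hlp0]
      exact sup_eq_left.mpr hlm_le
    rw [hsr]
    rw [spectrum.mem_iff, Matrix.isUnit_iff_isUnit_det, isUnit_iff_ne_zero, not_not]
    have halg : (algebraMap ℝ (Matrix (Fin 2) (Fin 2) ℝ)) lp = lp • (1 : Matrix (Fin 2) (Fin 2) ℝ) :=
      Algebra.algebraMap_eq_smul_one lp
    rw [halg, Matrix.det_fin_two]
    simp only [Matrix.sub_apply, Matrix.smul_apply, Matrix.one_apply,
      if_pos rfl, smul_eq_mul, mul_one, if_true]
    rw [if_neg (by decide : ¬((0:Fin 2) = 1)), if_neg (by decide : ¬((1:Fin 2) = 0))]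
    rw [hTdef] at hsum
    rw [hDdef] at hprod
    linear_combination lp * hsum - hprod
end

section
/- Let e, a be real numbers with 0 < a ≤ e²/4 and e ≥ 2, and let ω = [[e, -1], [a, 0]]. Then (1, 0) is not an eigenvector of ω, and consequently limsup_n |ω^n(1,0)|^{1/n} = (e + √(e²−4a))/2, where |(x,y)| = |x| + |y|. -/
open Filter Real Topology

noncomputable def pseq (e a : ℝ) : ℕ → ℝ
  | 0 => 1
  | 1 => e
  | (n+2) => e * pseq e a (n+1) - a * pseq e a n

lemma pseq_mulVec (e a : ℝ) :
    ∀ n : ℕ, ((!![e, -1; a, 0]) ^ (n+1)).mulVec ![1, 0] =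
      ![pseq e a (n+1), a * pseq e a n] := by
  intro n
  induction n with
  | zero =>
    funext i
    fin_cases i <;>
      simp [pseq, Matrix.mulVec, dotProduct, Fin.sum_univ_two]
  | succ n ih =>
    have h : (!![e, -1; a, 0]) ^ (n+2) = !![e, -1; a, 0] * (!![e, -1; a, 0]) ^ (n+1) :=
      pow_succ' _ _
    rw [h, ← Matrix.mulVec_mulVec, ih]
    funext i
    fin_cases i <;>
      (simp [pseq, Matrix.mulVec, dotProduct, Fin.sum_univ_two]; try ring)

lemma pseq_formula {e a lp lm : ℝ} (hsum : lp + lm = e) (hprod : lp * lm = a) :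
    ∀ n : ℕ, pseq e a (n+1) = lp * pseq e a n + lm ^ (n+1) := by
  intro n
  induction n with
  | zero => simp [pseq]; linarith
  | succ n ih =>
    show pseq e a (n+2) = _
    rw [pseq, ih]
    subst hsum hprod
    ring

lemma pseq_lower {e a lp lm : ℝ} (hsum : lp + lm = e) (hprod : lp * lm = a)
    (hlm : 0 ≤ lm) (hlp : 0 ≤ lp) : ∀ n : ℕ, lp ^ n ≤ pseq e a n := by
  intro n
  induction n with
  | zero => simp [pseq]
  | succ n ih =>
    rw [pseq_formula hsum hprod n]
    have h1 : 0 ≤ lm ^ (n+1) := pow_nonneg hlm _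
    have h2 : lp * lp ^ n ≤ lp * pseq e a n := mul_le_mul_of_nonneg_left ih hlp
    calc lp ^ (n+1) = lp * lp ^ n := by ring
    _ ≤ lp * pseq e a n + lm ^ (n+1) := by linarith

lemma pseq_upper {e a lp lm : ℝ} (hsum : lp + lm = e) (hprod : lp * lm = a)
    (hlm : 0 ≤ lm) (hlp : lm ≤ lp) : ∀ n : ℕ, pseq e a n ≤ (n + 1) * lp ^ n := by
  intro n
  have hlp0 : 0 ≤ lp := hlm.trans hlp
  induction n with
  | zero => simp [pseq]
  | succ n ih =>
    rw [pseq_formula hsum hprod n]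
    have h1 : lm ^ (n+1) ≤ lp ^ (n+1) := pow_le_pow_left₀ hlm hlp _
    have h2 : lp * pseq e a n ≤ lp * ((n + 1) * lp ^ n) := mul_le_mul_of_nonneg_left ih hlp0
    have h9 : lp * (((n : ℝ) + 1) * lp ^ n) = ((n : ℝ) + 1) * lp ^ (n + 1) := by ring
    push_cast
    push_cast at h2
    linarith

lemma aux_tendsto_one {c : ℝ} (hc : 0 < c) :
    Tendsto (fun n : ℕ => ((2 * n + 1 : ℝ) * c) ^ ((n : ℝ)⁻¹)) atTop (𝓝 1) := by
  have key1 : Tendsto (fun n : ℕ => (n : ℝ)⁻¹ * Real.log (2 * n + 1)) atTop (𝓝 0) := by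
    have h1 : Tendsto (fun n : ℕ => Real.log (2 * n + 1) / (2 * n + 1)) atTop (𝓝 0) := by
      have := (Real.tendsto_pow_log_div_mul_add_atTop 1 0 1 one_ne_zero).comp
        (tendsto_atTop_add_const_right atTop 1
          ((tendsto_natCast_atTop_atTop (R := ℝ)).const_mul_atTop two_pos))
      simpa [Function.comp_def] using this
    have h2 : Tendsto (fun n : ℕ => (2 * n + 1 : ℝ) / n) atTop (𝓝 2) := by
      have h : Tendsto (fun n : ℕ => 2 + (n : ℝ)⁻¹) atTop (𝓝 (2 + 0)) :=
        tendsto_const_nhds.add (tendsto_inv_atTop_zero.comp tendsto_natCast_atTop_atTop)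
      rw [add_zero] at h
      refine Tendsto.congr' ?_ h
      filter_upwards [eventually_ge_atTop 1] with n hn
      have hn0 : (n : ℝ) ≠ 0 := Nat.cast_ne_zero.2 (by omega)
      field_simp
    have h3 := h1.mul h2
    rw [zero_mul] at h3
    refine Tendsto.congr' ?_ h3
    filter_upwards [eventually_ge_atTop 1] with n hn
    have hn0 : (n : ℝ) ≠ 0 := Nat.cast_ne_zero.2 (by omega)
    have h21 : (2 * n + 1 : ℝ) ≠ 0 := by positivity
    field_simp
    try ring
  have key2 : Tendsto (fun n : ℕ => (n : ℝ)⁻¹ * Real.log c) atTop (𝓝 0) := by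
    have := (tendsto_inv_atTop_zero.comp (tendsto_natCast_atTop_atTop (R := ℝ))).mul_const
      (Real.log c)
    rwa [zero_mul] at this
  have key := key1.add key2
  rw [add_zero] at key
  have hpos : ∀ n : ℕ, (0 : ℝ) < (2 * n + 1) * c := fun n => by positivity
  have hexp : Tendsto
      (fun n : ℕ => Real.exp ((n : ℝ)⁻¹ * Real.log (2 * n + 1) + (n : ℝ)⁻¹ * Real.log c))
      atTop (𝓝 (Real.exp 0)) := (Real.continuous_exp.tendsto 0).comp key
  rw [Real.exp_zero] at hexp
  refine hexp.congr fun n => ?_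
  rw [Real.rpow_def_of_pos (hpos n), Real.log_mul (by positivity) (ne_of_gt hc)]
  ring_nf

/-- For `0 < a ≤ e²/4` and `e ≥ 2`, the vector `(1,0)` is not an eigenvector of
`ω = [[e,-1],[a,0]]`, and `limsup_n |ω^n (1,0)|^{1/n} = (e + √(e²-4a))/2`. -/
theorem stmt_12 (e a : ℝ) (ha0 : 0 < a) (ha : a ≤ e ^ 2 / 4) (he : 2 ≤ e) :
    (¬ ∃ lam : ℝ, (!![e, -1; a, 0]).mulVec ![1, 0] = lam • ![(1 : ℝ), 0]) ∧
    growth !![e, -1; a, 0] ![1, 0] = (e + Real.sqrt (e ^ 2 - 4 * a)) / 2 := by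
  constructor
  · rintro ⟨lam, h⟩
    have := congrFun h 1
    simp [Matrix.mulVec, dotProduct, Fin.sum_univ_two] at this
    linarith
  · set s := Real.sqrt (e ^ 2 - 4 * a) with hs
    have hdisc : 0 ≤ e ^ 2 - 4 * a := by linarith
    have hs2 : s ^ 2 = e ^ 2 - 4 * a := Real.sq_sqrt hdisc
    have hs0 : 0 ≤ s := Real.sqrt_nonneg _
    have hse : s ≤ e := by nlinarith
    set lp := (e + s) / 2 with hlp_def
    set lm := (e - s) / 2 with hlm_def
    have hgoal : (e + s) / 2 = lp := rfl
    have hsum : lp + lm = e := by rw [hlp_def, hlm_def]; ring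
    have hprod : lp * lm = a := by rw [hlp_def, hlm_def]; nlinarith
    have hlm0 : 0 ≤ lm := by rw [hlm_def]; linarith
    have hlmlp : lm ≤ lp := by rw [hlm_def, hlp_def]; linarith
    have hlp1 : 1 ≤ lp := by rw [hlp_def]; linarith
    have hlp0 : 0 < lp := lt_of_lt_of_le one_pos hlp1
    have hp_pos : ∀ n, 0 < pseq e a n := fun n =>
      lt_of_lt_of_le (pow_pos hlp0 n) (pseq_lower hsum hprod hlm0 hlp0.le n)
    have key : Tendsto
        (fun n : ℕ => (|((!![e, -1; a, 0] ^ n).mulVec ![1, 0]) 0| +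
          |((!![e, -1; a, 0] ^ n).mulVec ![1, 0]) 1|) ^ ((n : ℝ)⁻¹)) atTop (𝓝 lp) := by
      have hupper : Tendsto (fun n : ℕ => ((2 * n + 1 : ℝ) * lp) ^ ((n : ℝ)⁻¹) * lp)
          atTop (𝓝 lp) := by
        have := (aux_tendsto_one hlp0).mul_const lp
        rwa [one_mul] at this
      refine tendsto_of_tendsto_of_tendsto_of_le_of_le' tendsto_const_nhds hupper ?_ ?_
      · -- lower bound
        filter_upwards [eventually_ge_atTop 1] with n hn
        obtain ⟨m, rfl⟩ := Nat.exists_eq_add_of_le hn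
        rw [add_comm 1 m, pseq_mulVec]
        have hN : lp ^ (m+1) ≤ |(![pseq e a (m+1), a * pseq e a m] : Fin 2 → ℝ) 0| +
            |(![pseq e a (m+1), a * pseq e a m] : Fin 2 → ℝ) 1| := by
          simp only [Matrix.cons_val_zero, Matrix.cons_val_one, Matrix.head_cons]
          have h1 := pseq_lower hsum hprod hlm0 hlp0.le (m+1)
          have h2 : 0 ≤ a * pseq e a m := le_of_lt (mul_pos ha0 (hp_pos m))
          rw [abs_of_pos (hp_pos (m+1)), abs_of_nonneg h2]
          linarith
        calc lp = (lp ^ (m+1)) ^ (((m+1 : ℕ) : ℝ))⁻¹ := by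
              rw [← Real.rpow_natCast lp (m+1), ← Real.rpow_mul hlp0.le,
                mul_inv_cancel₀ (by positivity), Real.rpow_one]
        _ ≤ _ := Real.rpow_le_rpow (pow_nonneg hlp0.le _) hN (by positivity)
      · -- upper bound
        filter_upwards [eventually_ge_atTop 1] with n hn
        obtain ⟨m, rfl⟩ := Nat.exists_eq_add_of_le hn
        rw [add_comm 1 m, pseq_mulVec]
        have ha_lp : a ≤ lp ^ 2 := by nlinarith [mul_le_mul_of_nonneg_left hlmlp hlp0.le]
        have hN : |(![pseq e a (m+1), a * pseq e a m] : Fin 2 → ℝ) 0| +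
            |(![pseq e a (m+1), a * pseq e a m] : Fin 2 → ℝ) 1| ≤
            ((2 * (m+1 : ℕ) + 1 : ℝ) * lp) * lp ^ (m+1) := by
          simp only [Matrix.cons_val_zero, Matrix.cons_val_one, Matrix.head_cons]
          have h2 : 0 ≤ a * pseq e a m := le_of_lt (mul_pos ha0 (hp_pos m))
          rw [abs_of_pos (hp_pos (m+1)), abs_of_nonneg h2]
          have h3 := pseq_upper hsum hprod hlm0 hlmlp (m+1)
          have h4 := pseq_upper hsum hprod hlm0 hlmlp m
          have h5 : a * pseq e a m ≤ ((m : ℝ) + 1) * lp ^ (m+2) := by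
            have h6 : a * pseq e a m ≤ lp ^ 2 * pseq e a m :=
              mul_le_mul_of_nonneg_right ha_lp (hp_pos m).le
            have h7 := mul_le_mul_of_nonneg_left h4 (sq_nonneg lp)
            have h8 : lp ^ 2 * (((m : ℕ) + 1 : ℝ) * lp ^ m) = ((m : ℝ) + 1) * lp ^ (m+2) := by
              push_cast; ring
            push_cast at h7 ⊢
            nlinarith
          have hpow : lp ^ (m+1) ≤ lp ^ (m+2) := pow_le_pow_right₀ hlp1 (by omega)
          have hA : pseq e a (m+1) ≤ ((m : ℝ) + 2) * lp ^ (m+2) := by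
            push_cast at h3
            nlinarith
          have hR : ((2 * ((m : ℝ) + 1) + 1) * lp) * lp ^ (m+1) =
              (2 * (m : ℝ) + 3) * lp ^ (m+2) := by ring
          push_cast
          nlinarith
        calc (|(![pseq e a (m+1), a * pseq e a m] : Fin 2 → ℝ) 0| +
              |(![pseq e a (m+1), a * pseq e a m] : Fin 2 → ℝ) 1|) ^ (((m+1:ℕ) : ℝ))⁻¹
            ≤ (((2 * (m+1 : ℕ) + 1 : ℝ) * lp) * lp ^ (m+1)) ^ (((m+1:ℕ) : ℝ))⁻¹ :=
              Real.rpow_le_rpow (by positivity) hN (by positivity)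
        _ = ((2 * (m+1 : ℕ) + 1 : ℝ) * lp) ^ (((m+1:ℕ) : ℝ))⁻¹ * lp := by
              rw [Real.mul_rpow (by positivity) (pow_nonneg hlp0.le _),
                ← Real.rpow_natCast lp (m+1), ← Real.rpow_mul hlp0.le,
                mul_inv_cancel₀ (by positivity), Real.rpow_one]
        _ = _ := by norm_num
    unfold growth
    rw [key.limsup_eq]
end
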